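/- arXiv:2605.26865 — 8 statements merged into one kernel-verified Lean document; each statement's English description precedes it below -/
import Mathlib

section
/- Let G be a connected bipartite graph with bipartition X ⊔ Y that is matching-covered (every edge lies in a perfect matching) and 2-connected. Then |X| = |Y|, and for every non-empty proper subset A ⊊ X, the neighborhood satisfies |N_G(A)| ≥ |A| + 1. -/
attribute [local instance] Classical.propDecidable

/-- `X ⊔ Y` is a bipartition of the graph `G`. -/
def IsBipartition {V : Type*} (G : SimpleGraph V) [Fintype V] (X Y : Finset V) : Prop :=
  Disjoint X Y ∧ X ∪ Y = Finset.univ ∧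
    ∀ x y : V, G.Adj x y → (x ∈ X ∧ y ∈ Y) ∨ (x ∈ Y ∧ y ∈ X)

/-- `G` is connected and every edge of `G` lies in a perfect matching. -/
def MatchingCovered {V : Type*} (G : SimpleGraph V) : Prop :=
  G.Connected ∧ ∀ e ∈ G.edgeSet, ∃ M : G.Subgraph, M.IsPerfectMatching ∧ e ∈ M.edgeSet

/-- `G` is connected and remains connected after deleting any single vertex. -/
def TwoConnected {V : Type*} (G : SimpleGraph V) : Prop :=
  G.Connected ∧ ∀ v : V, (G.induce {u : V | u ≠ v}).Connected

/-- The neighborhood of the vertex set `A` in `G`. -/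
noncomputable def nbhd {V : Type*} [Fintype V] (G : SimpleGraph V) (A : Finset V) : Finset V :=
  Finset.univ.filter (fun y => ∃ x ∈ A, G.Adj x y)

lemma exists_partner {V : Type*} {G : SimpleGraph V} {M : G.Subgraph}
    (hM : M.IsPerfectMatching) :
    ∃ f : V → V, (∀ v, M.Adj v (f v)) ∧ Function.Injective f := by
  choose f hf using fun v => (hM.1 (hM.2 v)).exists
  refine ⟨f, hf, fun a b hab => ?_⟩
  have ha : M.Adj (f a) a := (hf a).symm
  have hb : M.Adj (f a) b := hab ▸ (hf b).symm
  exact ((hM.1 (hM.2 (f a))).unique ha hb)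

lemma exists_edge_of_ne {V : Type*} {G : SimpleGraph V} (h : G.Preconnected)
    {a b : V} (hab : a ≠ b) : ∃ x y : V, G.Adj x y := by
  obtain ⟨p⟩ := h a b
  cases p with
  | nil => exact absurd rfl hab
  | cons h' _ => exact ⟨_, _, h'⟩

theorem stmt0 {V : Type*} [Fintype V] (G : SimpleGraph V) (X Y : Finset V)
    (hbip : IsBipartition G X Y) (hmc : MatchingCovered G) (h2 : TwoConnected G) :
    X.card = Y.card ∧
      ∀ A : Finset V, A ⊆ X → A.Nonempty → A ≠ X → A.card + 1 ≤ (nbhd G A).card := by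
  obtain ⟨hdisj, hunion, hadj⟩ := hbip
  obtain ⟨hconn, hpm⟩ := hmc
  constructor
  · by_cases hV : Nonempty V
    · -- V nontrivial via 2-connectivity
      obtain ⟨v⟩ := hV
      have hnt : ∃ u : V, u ≠ v := by
        obtain ⟨⟨u, hu⟩⟩ := (h2.2 v).nonempty
        exact ⟨u, hu⟩
      obtain ⟨u, huv⟩ := hnt
      obtain ⟨x, y, hxy⟩ := exists_edge_of_ne hconn.preconnected huv
      obtain ⟨M, hM, -⟩ := hpm s(x, y) hxy
      obtain ⟨f, hfadj, hfinj⟩ := exists_partner hM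
      have hcross : ∀ v ∈ X, f v ∈ Y := by
        intro v hv
        rcases hadj v (f v) (M.adj_sub (hfadj v)) with ⟨_, h2⟩ | ⟨h1, _⟩
        · exact h2
        · exact absurd hv (Finset.disjoint_right.mp hdisj h1)
      have hcross' : ∀ v ∈ Y, f v ∈ X := by
        intro v hv
        rcases hadj v (f v) (M.adj_sub (hfadj v)) with ⟨h1, _⟩ | ⟨_, h2⟩
        · exact absurd hv (Finset.disjoint_left.mp hdisj h1)
        · exact h2
      exact le_antisymm
        (Finset.card_le_card_of_injOn f hcross (hfinj.injOn))
        (Finset.card_le_card_of_injOn f hcross' (hfinj.injOn))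
    · have hX : X = ∅ := Finset.eq_empty_of_forall_notMem fun a _ => hV ⟨a⟩
      have hY : Y = ∅ := Finset.eq_empty_of_forall_notMem fun a _ => hV ⟨a⟩
      rw [hX, hY]
  · intro A hA hAne hAX
    obtain ⟨a, ha⟩ := hAne
    obtain ⟨b, hbX, hbA⟩ : ∃ b ∈ X, b ∉ A := by
      by_contra h
      push_neg at h
      exact hAX (Finset.Subset.antisymm hA h)
    have hnbhdY : ∀ y ∈ nbhd G A, y ∈ Y := by
      intro y hy
      rw [nbhd, Finset.mem_filter] at hy
      obtain ⟨-, x, hxA, hadjxy⟩ := hy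
      rcases hadj x y hadjxy with ⟨_, h2⟩ | ⟨h1, _⟩
      · exact h2
      · exact absurd (hA hxA) (Finset.disjoint_right.mp hdisj h1)
    set S : Set V := ↑A ∪ ↑(nbhd G A) with hS
    have haS : a ∈ S := Or.inl ha
    have hbS : b ∉ S := by
      rintro (hb1 | hb2)
      · exact hbA hb1
      · exact Finset.disjoint_left.mp hdisj hbX (hnbhdY b hb2)
    obtain ⟨p⟩ := hconn.preconnected a b
    obtain ⟨d, -, hdS, hdS'⟩ := p.exists_boundary_dart S haS hbS
    have hdfst : d.fst ∈ (nbhd G A : Finset V) := by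
      rcases hdS with h1 | h2
      · exact absurd (Or.inr (by
          rw [nbhd, Finset.mem_coe, Finset.mem_filter]
          exact ⟨Finset.mem_univ _, d.fst, h1, d.adj⟩)) hdS'
      · exact h2
    -- edge from d.snd (∉ A) to d.fst (∈ nbhd G A)
    have hsndA : d.snd ∉ A := fun h => hdS' (Or.inl h)
    have hadj' : G.Adj d.snd d.fst := d.adj.symm
    obtain ⟨M, hM, heM⟩ := hpm s(d.snd, d.fst) hadj'
    have hMadj : M.Adj d.snd d.fst := SimpleGraph.Subgraph.mem_edgeSet.mp heM
    obtain ⟨f, hfadj, hfinj⟩ := exists_partner hM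
    have himg : A.image f ⊆ nbhd G A := by
      intro y hy
      rw [Finset.mem_image] at hy
      obtain ⟨v, hv, rfl⟩ := hy
      rw [nbhd, Finset.mem_filter]
      exact ⟨Finset.mem_univ _, v, hv, M.adj_sub (hfadj v)⟩
    have hynotimg : d.fst ∉ A.image f := by
      rw [Finset.mem_image]
      rintro ⟨v, hv, hfv⟩
      have h1 : M.Adj v d.fst := hfv ▸ hfadj v
      have := (hM.1 (hM.2 d.fst)).unique h1.symm hMadj.symm
      exact hsndA (this ▸ hv)
    have hss : A.image f ⊂ nbhd G A :=
      Finset.ssubset_iff_of_subset himg |>.mpr ⟨d.fst, hdfst, hynotimg⟩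
    have := Finset.card_lt_card hss
    rwa [Finset.card_image_of_injective _ hfinj] at this
end

section
/- Let G be a 2-connected matching-covered bipartite graph with bipartition X ⊔ Y. Suppose U, V ⊆ X satisfy |N_G(U)| = |U| + 1, |N_G(V)| = |V| + 1, U ∪ V ⊊ X, and N_G(U) ∩ N_G(V) ≠ ∅. Then |N_G(U ∪ V)| = |U ∪ V| + 1. -/
attribute [local instance] Classical.propDecidable

/-- `T` is a tight subset: `|N_G(T)| = |T| + 1`. -/
def Tight {V : Type*} [Fintype V] (G : SimpleGraph V) (T : Finset V) : Prop :=
  (nbhd G T).card = T.card + 1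

/-- `T ⊆ X` is an acceptable set of the bipartite graph `G` with bipartition `X ⊔ Y`:
the graph induced by the edges between `T` and `N_G(T)` is connected, and the induced
subgraph on `(X \ T) ⊔ (Y \ N_G(T))` is connected with at least one edge. -/
def Acceptable {V : Type*} [Fintype V] (G : SimpleGraph V) (X Y T : Finset V) : Prop :=
  T.Nonempty ∧ T ⊆ X ∧
    (G.induce (↑(T ∪ nbhd G T) : Set V)).Connected ∧
    (G.induce (↑((X \ T) ∪ (Y \ nbhd G T)) : Set V)).Connected ∧
    ∃ x ∈ X \ T, ∃ y ∈ Y \ nbhd G T, G.Adj x y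

section Aux

variable {V : Type*} [Fintype V]

lemma mem_nbhd {G : SimpleGraph V} {A : Finset V} {y : V} :
    y ∈ nbhd G A ↔ ∃ x ∈ A, G.Adj x y := by
  simp [nbhd]

lemma nbhd_union (G : SimpleGraph V) (A B : Finset V) :
    nbhd G (A ∪ B) = nbhd G A ∪ nbhd G B := by
  ext y
  simp only [mem_nbhd, Finset.mem_union]
  constructor
  · rintro ⟨x, hx | hx, hadj⟩
    · exact Or.inl ⟨x, hx, hadj⟩
    · exact Or.inr ⟨x, hx, hadj⟩
  · rintro (⟨x, hx, hadj⟩ | ⟨x, hx, hadj⟩)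
    · exact ⟨x, Or.inl hx, hadj⟩
    · exact ⟨x, Or.inr hx, hadj⟩

lemma nbhd_inter_subset (G : SimpleGraph V) (A B : Finset V) :
    nbhd G (A ∩ B) ⊆ nbhd G A ∩ nbhd G B := by
  intro y hy
  rw [mem_nbhd] at hy
  obtain ⟨x, hx, hadj⟩ := hy
  rw [Finset.mem_inter] at hx
  exact Finset.mem_inter.2 ⟨mem_nbhd.2 ⟨x, hx.1, hadj⟩, mem_nbhd.2 ⟨x, hx.2, hadj⟩⟩

lemma walk_closed {G : SimpleGraph V} {S : Set V}
    (h : ∀ v ∈ S, ∀ w, G.Adj v w → w ∈ S) {a b : V} (p : G.Walk a b) (ha : a ∈ S) :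
    b ∈ S := by
  induction p with
  | nil => exact ha
  | cons hadj p ih => exact ih (h _ ha _ hadj)

/-- Extract the partner function of a perfect matching. -/
lemma matching_fn {G : SimpleGraph V} (M : G.Subgraph) (hM : M.IsPerfectMatching) :
    ∃ f : V → V, (∀ v, M.Adj v (f v)) ∧ Function.Injective f ∧
      (∀ v w, M.Adj v w → f v = w) := by
  have hex : ∀ v : V, ∃! w, M.Adj v w := fun v => hM.1 (hM.2 v)
  choose f hf huniq using hex
  refine ⟨f, hf, ?_, fun v w h => (huniq v w h).symm⟩
  intro a b hab
  have ha : M.Adj (f a) a := (hf a).symm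
  have hb : M.Adj (f a) b := hab ▸ (hf b).symm
  have h1 := (hM.1 (hM.2 (f a))).unique ha hb
  exact h1

/-- Strict Hall property for nonempty proper subsets of `X`. -/
lemma strictHall (G : SimpleGraph V) (X Y : Finset V)
    (hbip : IsBipartition G X Y) (hmc : MatchingCovered G)
    (A : Finset V) (hA : A ⊆ X) (hne : A.Nonempty) (hAX : A ≠ X) :
    A.card + 1 ≤ (nbhd G A).card := by
  obtain ⟨hdisj, hcover, hbi⟩ := hbip
  -- pick x ∈ X \ A
  have hssub : A ⊂ X := lt_of_le_of_ne hA hAX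
  obtain ⟨x, hxX, hxA⟩ := Finset.exists_of_ssubset hssub
  -- nbhd A ⊆ Y
  have hnY : ∀ y ∈ nbhd G A, y ∈ Y := by
    intro y hy
    obtain ⟨a, haA, hadj⟩ := mem_nbhd.1 hy
    rcases hbi a y hadj with ⟨_, h⟩ | ⟨h, _⟩
    · exact h
    · exact absurd (hA haA) (Finset.disjoint_right.1 hdisj h)
  by_cases hedge : ∃ x' ∈ X, x' ∉ A ∧ ∃ y ∈ nbhd G A, G.Adj x' y
  · -- matching argument
    obtain ⟨x', hx'X, hx'A, y, hyN, hadj⟩ := hedge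
    obtain ⟨M, hM, heM⟩ := hmc.2 s(x', y) (G.mem_edgeSet.2 hadj)
    obtain ⟨f, hf, hinj, hfeq⟩ := matching_fn M hM
    have hfx : f x' = y := hfeq x' y (SimpleGraph.Subgraph.mem_edgeSet.1 heM)
    have hmaps : ∀ v ∈ insert x' A, f v ∈ nbhd G A := by
      intro v hv
      rcases Finset.mem_insert.1 hv with rfl | hvA
      · rw [hfx]; exact hyN
      · exact mem_nbhd.2 ⟨v, hvA, M.adj_sub (hf v)⟩
    have := Finset.card_le_card_of_injOn f hmaps (fun a _ b _ h => hinj h)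
    rwa [Finset.card_insert_of_notMem hx'A] at this
  · -- connectivity contradiction
    exfalso
    push_neg at hedge
    obtain ⟨a, haA⟩ := hne
    set S : Set V := (↑A : Set V) ∪ (↑(nbhd G A) : Set V) with hS
    have hclosed : ∀ v ∈ S, ∀ w, G.Adj v w → w ∈ S := by
      intro v hv w hadj
      rcases hv with hvA | hvN
      · exact Or.inr (mem_nbhd.2 ⟨v, hvA, hadj⟩)
      · have hvY : v ∈ Y := hnY v hvN
        have hwX : w ∈ X := by
          rcases hbi v w hadj with ⟨h, _⟩ | ⟨_, h⟩
          · exact absurd h (Finset.disjoint_right.1 hdisj hvY)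
          · exact h
        by_contra hwS
        have hwA : w ∉ A := fun h => hwS (Or.inl h)
        exact hedge w hwX hwA v hvN hadj.symm
    obtain ⟨p⟩ := hmc.1.preconnected a x
    have hxS : x ∈ S := walk_closed hclosed p (Or.inl haA)
    rcases hxS with h | h
    · exact hxA h
    · exact Finset.disjoint_left.1 hdisj hxX (hnY x h)

end Aux

theorem stmt1 {V : Type*} [Fintype V] (G : SimpleGraph V) (X Y : Finset V)
    (hbip : IsBipartition G X Y) (hmc : MatchingCovered G) (h2 : TwoConnected G)
    (U W : Finset V) (hU : U ⊆ X) (hW : W ⊆ X)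
    (hUt : Tight G U) (hWt : Tight G W)
    (hproper : U ∪ W ≠ X)
    (hmeet : (nbhd G U ∩ nbhd G W).Nonempty) :
    Tight G (U ∪ W) := by
  have hUne : U.Nonempty := by
    obtain ⟨y, hy⟩ := hmeet
    obtain ⟨x, hx, _⟩ := mem_nbhd.1 (Finset.mem_inter.1 hy).1
    exact ⟨x, hx⟩
  have hsub : U ∪ W ⊆ X := Finset.union_subset hU hW
  have hUWne : (U ∪ W).Nonempty := hUne.mono Finset.subset_union_left
  -- lower bound
  have hlow := strictHall G X Y hbip hmc (U ∪ W) hsub hUWne hproper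
  -- upper bound ingredients
  have hun : nbhd G (U ∪ W) = nbhd G U ∪ nbhd G W := nbhd_union G U W
  have h1 : (nbhd G U ∪ nbhd G W).card + (nbhd G U ∩ nbhd G W).card
      = (nbhd G U).card + (nbhd G W).card := Finset.card_union_add_card_inter _ _
  have h2' : (U ∪ W).card + (U ∩ W).card = U.card + W.card :=
    Finset.card_union_add_card_inter _ _
  have hint1 : 1 ≤ (nbhd G U ∩ nbhd G W).card := Finset.card_pos.2 hmeet
  unfold Tight at hUt hWt ⊢
  rw [hun]; rw [hun] at hlow
  by_cases hiw : (U ∩ W).Nonempty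
  · have hIX : U ∩ W ≠ X := by
      intro h
      apply hproper
      apply Finset.Subset.antisymm hsub
      rw [← h]
      exact (Finset.inter_subset_left).trans Finset.subset_union_left
    have hIsub : U ∩ W ⊆ X := Finset.inter_subset_left.trans hU
    have hI := strictHall G X Y hbip hmc (U ∩ W) hIsub hiw hIX
    have hII : (nbhd G (U ∩ W)).card ≤ (nbhd G U ∩ nbhd G W).card :=
      Finset.card_le_card (nbhd_inter_subset G U W)
    omega
  · have : (U ∩ W).card = 0 := by
      rw [Finset.not_nonempty_iff_eq_empty] at hiw
      simp [hiw]
    omega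
end

section
/- Let G be a 2-connected matching-covered bipartite graph with bipartition X ⊔ Y, |X| = |Y| = n, identified with vertex set of size 2n. Then the all-ones vector 1 ∈ ℤ^{2n} lies in the interior of n·P_G, and it is the unique lattice point in the interior of n·P_G. -/
attribute [local instance] Classical.propDecidable
open scoped Pointwise

/-- The vector `e_x + e_y ∈ ℝ^V` associated with the edge `{x, y}`. -/
def edgeVec {V : Type*} [DecidableEq V] (x y : V) : V → ℝ :=
  fun v => (if v = x then (1 : ℝ) else 0) + (if v = y then (1 : ℝ) else 0)

/-- The set of vectors `ρ(e) = e_i + e_j` for the edges `e = {i, j}` of `G`;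
the edge polytope `P_G` is its convex hull. -/
def edgeVecs {V : Type*} [DecidableEq V] (G : SimpleGraph V) : Set (V → ℝ) :=
  {f | ∃ x y : V, G.Adj x y ∧ f = edgeVec x y}

open Set
attribute [local instance] AffineSubspace.toNormedAddTorsor

lemma relint_extend {E : Type*} [NormedAddCommGroup E] [NormedSpace ℝ E]
    {s : Set E} {f p : E} (hf : f ∈ intrinsicInterior ℝ s) (hp : p ∈ s) :
    ∃ ε : ℝ, 0 < ε ∧ f + ε • (f - p) ∈ s := by
  obtain ⟨f', hf', hcoe⟩ := hf
  subst hcoe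
  haveI : Nonempty (affineSpan ℝ s) := ⟨f'⟩
  set p' : affineSpan ℝ s := ⟨p, subset_affineSpan ℝ s hp⟩ with hp'
  set c : ℝ → affineSpan ℝ s := fun ε => ε • (f' -ᵥ p') +ᵥ f' with hc
  have hcont : Continuous c :=
    Continuous.vadd (f := fun ε : ℝ => ε • (f' -ᵥ p')) (g := fun _ => f')
      (continuous_id.smul continuous_const) continuous_const
  have h0 : c 0 ∈ interior ((Subtype.val) ⁻¹' s : Set (affineSpan ℝ s)) := by
    simpa [hc] using hf'
  have := hcont.continuousAt (x := 0) (isOpen_interior.mem_nhds h0)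
  obtain ⟨δ, hδpos, hδ⟩ := Metric.mem_nhds_iff.1 this
  refine ⟨δ/2, by positivity, ?_⟩
  have hmem : c (δ/2) ∈ interior ((Subtype.val) ⁻¹' s : Set (affineSpan ℝ s)) := by
    apply hδ
    simp only [Metric.mem_ball, Real.dist_eq, sub_zero]
    rw [abs_of_pos (by positivity)]; linarith
  have := interior_subset hmem
  have hval : ((c (δ/2) : affineSpan ℝ s) : E) = f' + (δ/2) • ((f' : E) - p) := by
    simp [hc, AffineSubspace.coe_vadd, AffineSubspace.coe_vsub]
    abel
  simpa [hval] using this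

lemma relint_combo {E : Type*} [NormedAddCommGroup E] [NormedSpace ℝ E]
    {s : Set E} (hs : Convex ℝ s) {x y : E}
    (hx : x ∈ intrinsicInterior ℝ s) (hy : y ∈ s) {b : ℝ} (hb0 : 0 < b) (hb1 : b < 1) :
    (1 - b) • x + b • y ∈ intrinsicInterior ℝ s := by
  obtain ⟨x', hx', hcoe⟩ := hx
  subst hcoe
  haveI : Nonempty (affineSpan ℝ s) := ⟨x'⟩
  have h1b : (1 : ℝ) - b ≠ 0 := by linarith
  set y' : affineSpan ℝ s := ⟨y, subset_affineSpan ℝ s hy⟩ with hy'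
  set ψ : affineSpan ℝ s → affineSpan ℝ s := fun w => (1 - b)⁻¹ • (w -ᵥ y') +ᵥ y' with hψ
  have hcont : Continuous ψ :=
    Continuous.vadd (f := fun w : affineSpan ℝ s => (1 - b)⁻¹ • (w -ᵥ y')) (g := fun _ => y')
      ((continuous_id.vsub (continuous_const (y := y'))).const_smul (1 - b)⁻¹) continuous_const
  set z' : affineSpan ℝ s := (1 - b) • (x' -ᵥ y') +ᵥ y' with hz'
  have hψz : ψ z' = x' := by
    simp [hψ, hz', vadd_vsub, smul_smul, inv_mul_cancel₀ h1b]
  set t : Set (affineSpan ℝ s) := (Subtype.val) ⁻¹' s with ht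
  have hsub : ψ ⁻¹' (interior t) ⊆ t := by
    intro w hw
    have hw' : ψ w ∈ interior t := hw
    have hwmem : ((ψ w : affineSpan ℝ s) : E) ∈ s := (interior_subset : interior t ⊆ t) hw'
    have hrepr : (w : E) = (1 - b) • ((ψ w : affineSpan ℝ s) : E) + b • y := by
      have : ((ψ w : affineSpan ℝ s) : E) = (1 - b)⁻¹ • ((w : E) - y) + y := by
        simp [hψ, hy', AffineSubspace.coe_vadd, AffineSubspace.coe_vsub]
      rw [this, smul_add, smul_smul, mul_inv_cancel₀ h1b]
      rw [one_smul]
      module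
    rw [ht, mem_preimage, hrepr]
    exact hs hwmem hy (by linarith) (le_of_lt hb0) (by ring)
  have hzint : z' ∈ interior t := by
    apply interior_maximal hsub (hcont.isOpen_preimage _ isOpen_interior)
    simpa [mem_preimage, hψz] using hx'
  refine ⟨z', hzint, ?_⟩
  simp [hz', AffineSubspace.coe_vadd, AffineSubspace.coe_vsub, smul_sub]
  module

noncomputable def Phi {V : Type*} [DecidableEq V] : Sym2 V → (V → ℝ) :=
  Sym2.lift ⟨edgeVec, fun x y => by funext v; simp [edgeVec]; ring⟩

section PhiLemmas
variable {V : Type*} [Fintype V] [DecidableEq V] {G : SimpleGraph V}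

omit [Fintype V] in
lemma Phi_apply {x y : V} (hxy : x ≠ y) (v : V) :
    Phi s(x, y) v = if v = x ∨ v = y then 1 else 0 := by
  simp only [Phi, Sym2.lift_mk, edgeVec]
  rcases eq_or_ne v x with rfl | hx <;> rcases eq_or_ne v y with rfl | hy <;>
    simp_all

omit [Fintype V] in
lemma Phi_nonneg (e : Sym2 V) (v : V) : 0 ≤ Phi e v := by
  induction e with
  | _ x y => simp only [Phi, Sym2.lift_mk, edgeVec]; positivity

lemma pm_sum {M : G.Subgraph} (hM : M.IsPerfectMatching) :
    ∑ e ∈ M.edgeSet.toFinite.toFinset, Phi e = (1 : V → ℝ) := by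
  funext v
  rw [Finset.sum_apply]
  obtain ⟨w, hw, huniq⟩ := hM.1 (hM.2 v)
  have hterm : ∀ e ∈ M.edgeSet.toFinite.toFinset, Phi e v = if v ∈ e then (1:ℝ) else 0 := by
    intro e he
    rw [Set.Finite.mem_toFinset] at he
    induction e with
    | _ x y =>
      have hadj : M.Adj x y := (SimpleGraph.Subgraph.mem_edgeSet).1 he
      rw [Phi_apply hadj.ne]
      simp [Sym2.mem_iff]
  rw [Finset.sum_congr rfl hterm, Finset.sum_boole]
  have hfil : (M.edgeSet.toFinite.toFinset.filter (fun e => v ∈ e)) = {s(v, w)} := by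
    ext e
    simp only [Finset.mem_filter, Set.Finite.mem_toFinset, Finset.mem_singleton]
    constructor
    · rintro ⟨he, hv⟩
      induction e with
      | _ x y =>
        have hadj : M.Adj x y := (SimpleGraph.Subgraph.mem_edgeSet).1 he
        rcases Sym2.mem_iff.1 hv with rfl | rfl
        · rw [huniq y hadj]
        · rw [Sym2.eq_swap, huniq x hadj.symm]
    · rintro rfl
      exact ⟨(SimpleGraph.Subgraph.mem_edgeSet).2 hw, Sym2.mem_mk_left v w⟩
  rw [hfil]
  simp

lemma phi_coord_sum {e : Sym2 V} (he : e ∈ G.edgeSet) : ∑ v, Phi e v = 2 := by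
  induction e with
  | _ x y =>
    have hxy : x ≠ y := ((SimpleGraph.mem_edgeSet G).1 he).ne
    simp only [Phi, Sym2.lift_mk, edgeVec, Finset.sum_add_distrib,
      Finset.sum_ite_eq' Finset.univ, Finset.mem_univ, if_true]
    norm_num

omit [Fintype V] in
lemma Phi_mem_edgeVecs {e : Sym2 V} (he : e ∈ G.edgeSet) : Phi e ∈ edgeVecs G := by
  induction e with
  | _ x y => exact ⟨x, y, (SimpleGraph.mem_edgeSet G).1 he, rfl⟩

end PhiLemmas


set_option maxHeartbeats 1000000 in
theorem stmt4 {V : Type*} [Fintype V] [DecidableEq V] (G : SimpleGraph V)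
    (X Y : Finset V) (n : ℕ)
    (hbip : IsBipartition G X Y) (hX : X.card = n) (hY : Y.card = n)
    (hmc : MatchingCovered G) (h2 : TwoConnected G) :
    (1 : V → ℝ) ∈ intrinsicInterior ℝ ((n : ℝ) • convexHull ℝ (edgeVecs G)) ∧
      ∀ f : V → ℝ, f ∈ intrinsicInterior ℝ ((n : ℝ) • convexHull ℝ (edgeVecs G)) →
        (∀ v : V, ∃ k : ℤ, f v = (k : ℝ)) → f = 1 := by
  obtain ⟨hdisj, huniv, hadjXY⟩ := hbip
  have hconn := hmc.1
  haveI hVne : Nonempty V := hconn.nonempty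
  have hmemXY : ∀ v : V, v ∈ X ∨ v ∈ Y := by
    intro v
    have hv := Finset.mem_univ v
    rw [← huniv] at hv
    exact (@Finset.mem_union V (fun a b => Classical.propDecidable (a = b)) X Y v).1 hv
  have huniv' : X ∪ Y = Finset.univ := by
    ext v
    simp only [Finset.mem_union, Finset.mem_univ, iff_true]
    exact hmemXY v
  have hcardV : Fintype.card V = 2 * n := by
    rw [← Finset.card_univ, ← huniv', Finset.card_union_of_disjoint hdisj, hX, hY]; ring
  have hn : 0 < n := by
    rcases Nat.eq_zero_or_pos n with rfl | h
    · have := Fintype.card_pos (α := V); omega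
    · exact h
  have hnR : (0:ℝ) < n := by exact_mod_cast hn
  have hnR' : (n:ℝ) ≠ 0 := ne_of_gt hnR
  -- an edge exists
  have hcard2 : 1 < Fintype.card V := by omega
  set E : Finset (Sym2 V) := G.edgeSet.toFinite.toFinset with hE
  have hEne : E.Nonempty := by
    obtain ⟨x, y, hxy⟩ := Fintype.exists_pair_of_one_lt_card hcard2
    obtain ⟨wlk⟩ := hconn.preconnected x y
    cases wlk with
    | nil => exact absurd rfl hxy
    | cons h _ => exact ⟨_, (Set.Finite.mem_toFinset _).2 ((SimpleGraph.mem_edgeSet G).mpr h)⟩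
  have hEpos : (0:ℝ) < E.card := by exact_mod_cast Finset.card_pos.2 hEne
  -- choose matchings
  have hMex : ∀ e : Sym2 V, ∃ M : G.Subgraph,
      e ∈ G.edgeSet → M.IsPerfectMatching ∧ e ∈ M.edgeSet := by
    intro e
    by_cases he : e ∈ G.edgeSet
    · obtain ⟨M, h1, h2⟩ := hmc.2 e he; exact ⟨M, fun _ => ⟨h1, h2⟩⟩
    · exact ⟨⊥, fun h => absurd h he⟩
  choose m hm using hMex
  set Mf : Sym2 V → Finset (Sym2 V) := fun e => ((m e).edgeSet).toFinite.toFinset with hMf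
  have hMf_sub : ∀ e ∈ E, Mf e ⊆ E := by
    intro e he f hf
    rw [Set.Finite.mem_toFinset] at hf ⊢
    exact (m e).edgeSet_subset hf
  set c : Sym2 V → ℝ := fun f => (∑ e ∈ E, if f ∈ Mf e then (1:ℝ) else 0) / E.card with hc
  have hc_nonneg : ∀ f, 0 ≤ c f := by
    intro f
    apply div_nonneg _ (le_of_lt hEpos)
    exact Finset.sum_nonneg fun e _ => by positivity
  have hc_pos : ∀ f ∈ E, 0 < c f := by
    intro f hf
    apply div_pos _ hEpos
    apply Finset.sum_pos' (fun e _ => by positivity)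
    refine ⟨f, hf, ?_⟩
    have : f ∈ Mf f := by
      rw [Set.Finite.mem_toFinset]
      exact (hm f ((Set.Finite.mem_toFinset _).1 hf)).2
    simp [this]
  have hc_sumPhi : ∑ f ∈ E, c f • Phi f = (1 : V → ℝ) := by
    have step1 : ∀ f ∈ E, c f • Phi f
        = ((E.card:ℝ))⁻¹ • ∑ e ∈ E, (if f ∈ Mf e then Phi f else 0) := by
      intro f _
      rw [hc]
      simp only [div_eq_inv_mul, mul_smul]
      congr 1
      rw [Finset.sum_smul]
      congr 1; funext e
      rw [ite_smul, one_smul, zero_smul]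
    rw [Finset.sum_congr rfl step1, ← Finset.smul_sum, Finset.sum_comm]
    have inner : ∀ e ∈ E, (∑ f ∈ E, if f ∈ Mf e then Phi f else 0) = (1 : V → ℝ) := by
      intro e he
      rw [Finset.sum_ite_mem, Finset.inter_eq_right.2 (hMf_sub e he)]
      exact pm_sum (hm e ((Set.Finite.mem_toFinset _).1 he)).1
    rw [Finset.sum_congr rfl inner, Finset.sum_const, ← Nat.cast_smul_eq_nsmul ℝ, smul_smul,
      inv_mul_cancel₀ (ne_of_gt hEpos), one_smul]
  have hc_sum : ∑ f ∈ E, c f = n := by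
    have h2 : ∑ v, ∑ f ∈ E, c f * Phi f v = (Fintype.card V : ℝ) := by
      have := congrArg (fun g : V → ℝ => ∑ v, g v) hc_sumPhi
      simpa [Finset.sum_apply, Pi.smul_apply, smul_eq_mul, Finset.card_univ] using this
    rw [Finset.sum_comm] at h2
    have h3 : ∀ f ∈ E, ∑ v, c f * Phi f v = c f * 2 := by
      intro f hf
      rw [← Finset.mul_sum, phi_coord_sum ((Set.Finite.mem_toFinset _).1 hf)]
    rw [Finset.sum_congr rfl h3, ← Finset.sum_mul, hcardV] at h2
    push_cast at h2
    linarith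
  -- the finite point set
  have hSfin : (edgeVecs G).Finite := by
    apply Set.Finite.subset (Set.Finite.image2 edgeVec Set.finite_univ Set.finite_univ)
    rintro p ⟨x, y, _, rfl⟩
    exact Set.mem_image2_of_mem (Set.mem_univ x) (Set.mem_univ y)
  have hA : ((n:ℝ) • edgeVecs G).Finite := hSfin.smul_set
  set F : Finset (V → ℝ) := hA.toFinset with hF
  have hCrw : (n : ℝ) • convexHull ℝ (edgeVecs G) = convexHull ℝ ((n:ℝ) • edgeVecs G) :=
    (convexHull_smul _ _).symm
  have hPhiF : ∀ f ∈ E, (n:ℝ) • Phi f ∈ F := by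
    intro f hf
    rw [hF, Set.Finite.mem_toFinset]
    exact Set.smul_mem_smul_set (Phi_mem_edgeVecs ((Set.Finite.mem_toFinset _).1 hf))
  -- the positive weight function
  set μ : (V → ℝ) → ℝ := fun p => ∑ f ∈ E, if (n:ℝ) • Phi f = p then c f / n else 0 with hμ
  have hμ_nonneg : ∀ p, 0 ≤ μ p := by
    intro p
    apply Finset.sum_nonneg
    intro f _
    have := hc_nonneg f
    split <;> positivity
  have hμ_sum : ∑ p ∈ F, μ p = 1 := by
    rw [hμ]
    simp only
    rw [Finset.sum_comm]
    have inner : ∀ f ∈ E, (∑ p ∈ F, if (n:ℝ) • Phi f = p then c f / n else 0) = c f / n := by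
      intro f hf
      rw [Finset.sum_ite_eq F ((n:ℝ) • Phi f) (fun _ => c f / n), if_pos (hPhiF f hf)]
    rw [Finset.sum_congr rfl inner, ← Finset.sum_div, hc_sum, div_self hnR']
  have hμ_comb : ∑ p ∈ F, μ p • p = (1 : V → ℝ) := by
    rw [hμ]
    simp only
    have expand : ∀ p ∈ F, (∑ f ∈ E, if (n:ℝ) • Phi f = p then c f / n else 0) • p
        = ∑ f ∈ E, (if (n:ℝ) • Phi f = p then (c f / n) • p else 0) := by
      intro p _
      rw [Finset.sum_smul]
      congr 1; funext f
      rw [ite_smul, zero_smul]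
    rw [Finset.sum_congr rfl expand, Finset.sum_comm]
    have inner : ∀ f ∈ E, (∑ p ∈ F, if (n:ℝ) • Phi f = p then (c f / n) • p else 0)
        = c f • Phi f := by
      intro f hf
      rw [Finset.sum_ite_eq F ((n:ℝ) • Phi f) (fun p => (c f / n) • p), if_pos (hPhiF f hf),
        smul_smul, div_mul_cancel₀ _ hnR']
    rw [Finset.sum_congr rfl inner, hc_sumPhi]
  have hμ_pos : ∀ p ∈ F, 0 < μ p := by
    intro p hp
    rw [hF, Set.Finite.mem_toFinset] at hp
    obtain ⟨q, hq, rfl⟩ := hp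
    obtain ⟨x, y, hadj, rfl⟩ := hq
    have hfE : s(x, y) ∈ E := (Set.Finite.mem_toFinset _).2 ((SimpleGraph.mem_edgeSet G).mpr hadj)
    have hterm : ∀ f ∈ E, (0:ℝ) ≤ if (n:ℝ) • Phi f = (n:ℝ) • edgeVec x y then c f / n else 0 := by
      intro f _
      split
      · exact div_nonneg (hc_nonneg f) (le_of_lt hnR)
      · exact le_refl 0
    show (0:ℝ) < ∑ f ∈ E, if (n:ℝ) • Phi f = (n:ℝ) • edgeVec x y then c f / n else 0
    apply Finset.sum_pos' hterm
    refine ⟨s(x, y), hfE, ?_⟩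
    rw [if_pos (show (n:ℝ) • Phi s(x, y) = (n:ℝ) • edgeVec x y by rfl)]
    exact div_pos (hc_pos _ hfE) hnR
  -- 1 is in the hull
  have h1mem : (1 : V → ℝ) ∈ convexHull ℝ ((n:ℝ) • edgeVecs G) := by
    rw [hA.convexHull_eq]
    exact ⟨μ, fun p hp => hμ_nonneg p, hμ_sum, by
      rw [Finset.centerMass_eq_of_sum_1 _ _ hμ_sum]
      simpa using hμ_comb⟩
  -- a relative interior point z
  have hC_conv : Convex ℝ (convexHull ℝ ((n:ℝ) • edgeVecs G)) := convex_convexHull ℝ _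
  obtain ⟨z, hz⟩ := Set.Nonempty.intrinsicInterior hC_conv ⟨1, h1mem⟩
  have hzC : z ∈ convexHull ℝ ((n:ℝ) • edgeVecs G) := intrinsicInterior_subset hz
  rw [hA.convexHull_eq] at hzC
  obtain ⟨ν, hν0, hνsum, hνmass⟩ := hzC
  rw [Finset.centerMass_eq_of_sum_1 _ _ hνsum] at hνmass
  simp only [id] at hνmass
  have hν_le : ∀ p ∈ F, ν p ≤ 1 := by
    intro p hp
    calc ν p ≤ ∑ q ∈ F, ν q :=
          Finset.single_le_sum (fun q hq => hν0 q ((Set.Finite.mem_toFinset _).1 hq)) hp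
      _ = 1 := hνsum
  -- choose b
  have hFne : F.Nonempty := ⟨_, hPhiF _ hEne.choose_spec⟩
  set μmin : ℝ := F.inf' hFne μ with hμmin
  have hμmin_pos : 0 < μmin := by
    rw [hμmin, Finset.lt_inf'_iff]
    exact fun p hp => hμ_pos p hp
  have hμmin_le : ∀ p ∈ F, μmin ≤ μ p := fun p hp => Finset.inf'_le μ hp
  set b : ℝ := max (1 - μmin) (1/2) with hb
  have hb0 : 0 < b := lt_of_lt_of_le (by norm_num) (le_max_right _ _)
  have hb1 : b < 1 := by
    rw [hb, max_lt_iff]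
    constructor <;> [linarith; norm_num]
  have hbne : b ≠ 0 := ne_of_gt hb0
  have h1b_nonneg : 0 ≤ 1 - b := by linarith
  -- the pushed-out point w
  set κ : (V → ℝ) → ℝ := fun p => (μ p - (1 - b) * ν p) / b with hκ
  have hκ0 : ∀ p ∈ F, 0 ≤ κ p := by
    intro p hp
    apply div_nonneg _ (le_of_lt hb0)
    have h1 : (1 - b) * ν p ≤ (1 - b) * 1 :=
      mul_le_mul_of_nonneg_left (hν_le p hp) h1b_nonneg
    have h2 : 1 - b ≤ μmin := by
      have := le_max_left (1 - μmin) (1/2)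
      rw [← hb] at this
      linarith
    have := hμmin_le p hp
    linarith
  have hκsum : ∑ p ∈ F, κ p = 1 := by
    rw [hκ]
    simp only
    rw [← Finset.sum_div, Finset.sum_sub_distrib, ← Finset.mul_sum, hμ_sum, hνsum]
    field_simp
    ring
  set w : V → ℝ := ∑ p ∈ F, κ p • p with hw
  have hwC : w ∈ convexHull ℝ ((n:ℝ) • edgeVecs G) := by
    have := Finset.centerMass_mem_convexHull F hκ0 (by rw [hκsum]; norm_num)
      (fun p hp => (Set.Finite.mem_toFinset _).1 hp : ∀ p ∈ F, p ∈ (n:ℝ) • edgeVecs G)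
    rwa [Finset.centerMass_eq_of_sum_1 _ _ hκsum] at this
  have hkey : (1 - b) • z + b • w = (1 : V → ℝ) := by
    rw [hw, ← hνmass, Finset.smul_sum, Finset.smul_sum, ← Finset.sum_add_distrib, ← hμ_comb]
    apply Finset.sum_congr rfl
    intro p _
    rw [smul_smul, smul_smul, ← add_smul]
    congr 1
    rw [hκ]
    field_simp
    ring
  have hpart1 : (1 : V → ℝ) ∈ intrinsicInterior ℝ ((n : ℝ) • convexHull ℝ (edgeVecs G)) := by
    rw [hCrw, ← hkey]
    exact relint_combo hC_conv hz hwC hb0 hb1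
  refine ⟨hpart1, ?_⟩
  intro f hf hint
  rw [hCrw] at hf
  set D : Set (V → ℝ) := {g | (∀ v, 0 ≤ g v) ∧ ∑ v ∈ X, g v = n ∧ ∑ v ∈ Y, g v = n} with hD
  have hD_conv : Convex ℝ D := by
    rintro g ⟨hg0, hgX, hgY⟩ h ⟨hh0, hhX, hhY⟩ a b ha hb hab
    refine ⟨fun v => add_nonneg (mul_nonneg ha (hg0 v)) (mul_nonneg hb (hh0 v)), ?_, ?_⟩
    · simp only [Pi.add_apply, Pi.smul_apply, smul_eq_mul]
      rw [Finset.sum_add_distrib, ← Finset.mul_sum, ← Finset.mul_sum, hgX, hhX]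
      linear_combination (n:ℝ) * hab
    · simp only [Pi.add_apply, Pi.smul_apply, smul_eq_mul]
      rw [Finset.sum_add_distrib, ← Finset.mul_sum, ← Finset.mul_sum, hgY, hhY]
      linear_combination (n:ℝ) * hab
  have hsumZ : ∀ (Z : Finset V) (x y : V), ∑ v ∈ Z, ((n:ℝ) • edgeVec x y) v
      = n * ((if x ∈ Z then (1:ℝ) else 0) + (if y ∈ Z then (1:ℝ) else 0)) := by
    intro Z x y
    simp only [Pi.smul_apply, smul_eq_mul, edgeVec, ← Finset.mul_sum]
    congr 1
    rw [Finset.sum_add_distrib, Finset.sum_ite_eq' Z x (fun _ => (1:ℝ)),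
      Finset.sum_ite_eq' Z y (fun _ => (1:ℝ))]
  have hAD : (n:ℝ) • edgeVecs G ⊆ D := by
    rintro p ⟨q, ⟨x, y, hadj, rfl⟩, rfl⟩
    have hXmem : ∀ {u : V}, u ∈ Y → u ∉ X := fun hu => Finset.disjoint_right.1 hdisj hu
    have hYmem : ∀ {u : V}, u ∈ X → u ∉ Y := fun hu => Finset.disjoint_left.1 hdisj hu
    refine ⟨?_, ?_, ?_⟩
    · intro v
      have : (0:ℝ) ≤ edgeVec x y v := by unfold edgeVec; positivity
      simpa using mul_nonneg (le_of_lt hnR) this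
    · rw [hsumZ X x y]
      rcases hadjXY x y hadj with ⟨hx, hy⟩ | ⟨hx, hy⟩
      · rw [if_pos hx, if_neg (hXmem hy)]; ring
      · rw [if_neg (hXmem hx), if_pos hy]; ring
    · rw [hsumZ Y x y]
      rcases hadjXY x y hadj with ⟨hx, hy⟩ | ⟨hx, hy⟩
      · rw [if_neg (hYmem hx), if_pos hy]; ring
      · rw [if_pos hx, if_neg (hYmem hy)]; ring
  have hhullD : convexHull ℝ ((n:ℝ) • edgeVecs G) ⊆ D := convexHull_min hAD hD_conv
  have hfD : f ∈ D := hhullD (intrinsicInterior_subset hf)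
  have hf1 : ∀ v, 1 ≤ f v := by
    intro v
    obtain ⟨k, hk⟩ := hint v
    by_contra hlt
    push_neg at hlt
    have hk0 : (0:ℤ) ≤ k := by
      have := hfD.1 v
      rw [hk] at this
      exact_mod_cast this
    have hk1 : k < 1 := by
      rw [hk] at hlt
      exact_mod_cast hlt
    have hkz : k = 0 := by omega
    have h0 : f v = 0 := by rw [hk, hkz]; norm_num
    obtain ⟨v', hv'⟩ := Fintype.exists_ne_of_one_lt_card hcard2 v
    obtain ⟨wlk⟩ := hconn.preconnected v v'
    have hadjv : ∃ u, G.Adj v u := by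
      cases wlk with
      | nil => exact absurd rfl hv'.symm
      | cons h _ => exact ⟨_, h⟩
    obtain ⟨u, hu⟩ := hadjv
    set p : V → ℝ := (n:ℝ) • edgeVec v u with hp
    have hpmem : p ∈ convexHull ℝ ((n:ℝ) • edgeVecs G) :=
      subset_convexHull ℝ _ (Set.smul_mem_smul_set ⟨v, u, hu, rfl⟩)
    obtain ⟨ε, hε, hmem⟩ := relint_extend hf hpmem
    have hmemD := hhullD hmem
    have hcoord := hmemD.1 v
    have hpv : p v = n := by
      rw [hp]
      have h1 : edgeVec v u v = 1 := by simp [edgeVec, hu.ne]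
      simp [h1]
    simp only [Pi.add_apply, Pi.smul_apply, Pi.sub_apply, smul_eq_mul] at hcoord
    rw [h0, hpv] at hcoord
    linarith [mul_pos hε hnR]
  have hX1 : ∀ v ∈ X, f v = 1 := by
    have hzero : ∑ v ∈ X, (f v - 1) = 0 := by
      rw [Finset.sum_sub_distrib, hfD.2.1, Finset.sum_const, hX]
      simp
    intro v hv
    have := (Finset.sum_eq_zero_iff_of_nonneg (fun w hw => by linarith [hf1 w])).1 hzero v hv
    linarith
  have hY1 : ∀ v ∈ Y, f v = 1 := by
    have hzero : ∑ v ∈ Y, (f v - 1) = 0 := by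
      rw [Finset.sum_sub_distrib, hfD.2.2, Finset.sum_const, hY]
      simp
    intro v hv
    have := (Finset.sum_eq_zero_iff_of_nonneg (fun w hw => by linarith [hf1 w])).1 hzero v hv
    linarith
  funext v
  rcases hmemXY v with h | h
  · simpa using hX1 v h
  · simpa using hY1 v h
end

section
/- Let G be a 2-connected matching-covered bipartite graph with bipartition X ⊔ Y, |X| = |Y| = n. Every lattice point of the relative interior of (n+1)·P_G has the form 1 + e_x + e_y for some x ∈ X and y ∈ Y, where 1 is the all-ones vector. -/
attribute [local instance] Classical.propDecidable
open scoped Pointwise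

/-- From a point in the intrinsic interior of `s` one can move slightly beyond it,
away from any other point of `s`, while staying in `s`. -/
lemma relint_beyond {E : Type*} [AddCommGroup E] [Module ℝ E] [TopologicalSpace E]
    [IsTopologicalAddGroup E] [ContinuousSMul ℝ E] {s : Set E} {x y : E}
    (hx : x ∈ intrinsicInterior ℝ s) (hy : y ∈ s) :
    ∃ ε : ℝ, 0 < ε ∧ x + ε • (x - y) ∈ s := by
  obtain ⟨x', hx', hcoe⟩ := mem_intrinsicInterior.1 hx
  have hxA : x ∈ affineSpan ℝ s := hcoe ▸ x'.2
  have hyA : y ∈ affineSpan ℝ s := subset_affineSpan ℝ s hy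
  have hmem : ∀ t : ℝ, t • (x - y) + y ∈ affineSpan ℝ s := by
    intro t
    have := AffineSubspace.smul_vsub_vadd_mem (affineSpan ℝ s) t hxA hyA hyA
    simpa [vsub_eq_sub, vadd_eq_add] using this
  set φ : ℝ → affineSpan ℝ s := fun t => ⟨t • (x - y) + y, hmem t⟩ with hφ
  have hφc : Continuous φ :=
    Continuous.subtype_mk ((continuous_id.smul continuous_const).add continuous_const) _
  have hφ1 : φ 1 = x' := by
    apply Subtype.ext
    simp only [hφ, one_smul, hcoe]
    abel
  have hnb : φ ⁻¹' interior (((↑) : affineSpan ℝ s → E) ⁻¹' s) ∈ nhds (1 : ℝ) := by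
    refine hφc.continuousAt.preimage_mem_nhds ?_
    rw [hφ1]
    exact isOpen_interior.mem_nhds hx'
  obtain ⟨δ, hδ, hball⟩ := Metric.mem_nhds_iff.1 hnb
  refine ⟨δ / 2, by positivity, ?_⟩
  have ht : (1 + δ / 2 : ℝ) ∈ Metric.ball (1 : ℝ) δ := by
    simp only [Metric.mem_ball, Real.dist_eq]
    rw [add_sub_cancel_left, abs_of_pos (by positivity)]
    linarith
  have hmem2' : φ (1 + δ / 2) ∈ (Subtype.val ⁻¹' s : Set (affineSpan ℝ s)) :=
    interior_subset (hball ht)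
  have hmem2 : (↑(φ (1 + δ / 2)) : E) ∈ s := hmem2'
  have heq : (1 + δ / 2 : ℝ) • (x - y) + y = x + (δ / 2) • (x - y) := by
    rw [add_smul, one_smul]
    abel
  simpa [hφ, heq] using hmem2

/-- Counting lemma: integers `≥ 1` on a finite set with total `card + 1` are all `1`
except one which is `2`. -/
lemma exists_two {V : Type*} [DecidableEq V] (s : Finset V) (k : V → ℤ)
    (hk : ∀ v ∈ s, 1 ≤ k v) (hsum : ∑ v ∈ s, k v = (s.card : ℤ) + 1) :
    ∃ x ∈ s, k x = 2 ∧ ∀ v ∈ s, v ≠ x → k v = 1 := by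
  have h1 : ∑ v ∈ s, (k v - 1) = 1 := by
    rw [Finset.sum_sub_distrib, hsum]
    simp
  have hne : ∃ x ∈ s, k x - 1 ≠ 0 := by
    by_contra h
    push_neg at h
    rw [Finset.sum_eq_zero (fun v hv => h v hv)] at h1
    exact absurd h1 (by norm_num)
  obtain ⟨x, hxs, hxne⟩ := hne
  have hrest : 0 ≤ ∑ v ∈ s.erase x, (k v - 1) :=
    Finset.sum_nonneg fun v hv => by have := hk v (Finset.mem_of_mem_erase hv); omega
  have hsplit : (k x - 1) + ∑ v ∈ s.erase x, (k v - 1) = 1 :=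
    (Finset.add_sum_erase _ _ hxs).trans h1
  have hx1 : 1 ≤ k x - 1 := by have := hk x hxs; omega
  have hxe : k x = 2 := by omega
  have hz : ∑ v ∈ s.erase x, (k v - 1) = 0 := by omega
  refine ⟨x, hxs, hxe, fun v hv hvx => ?_⟩
  have := (Finset.sum_eq_zero_iff_of_nonneg
      (fun u hu => by have := hk u (Finset.mem_of_mem_erase hu); omega)).1 hz v
      (Finset.mem_erase.2 ⟨hvx, hv⟩)
  omega

lemma sum_edgeVec {V : Type*} [DecidableEq V] (s : Finset V) (x y : V) :
    ∑ u ∈ s, edgeVec x y u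
      = (if x ∈ s then (1 : ℝ) else 0) + (if y ∈ s then (1 : ℝ) else 0) := by
  unfold edgeVec
  rw [Finset.sum_add_distrib, Finset.sum_ite_eq' s x (fun _ => (1 : ℝ)),
    Finset.sum_ite_eq' s y (fun _ => (1 : ℝ))]

theorem stmt5 {V : Type*} [Fintype V] [DecidableEq V] (G : SimpleGraph V)
    (X Y : Finset V) (n : ℕ)
    (hbip : IsBipartition G X Y) (hX : X.card = n) (hY : Y.card = n)
    (hmc : MatchingCovered G) (h2 : TwoConnected G)
    (hone : (1 : V → ℝ) ∈ intrinsicInterior ℝ ((n : ℝ) • convexHull ℝ (edgeVecs G))) :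
    ∀ f : V → ℝ,
      f ∈ intrinsicInterior ℝ (((n : ℝ) + 1) • convexHull ℝ (edgeVecs G)) →
      (∀ v : V, ∃ k : ℤ, f v = (k : ℝ)) →
      ∃ x ∈ X, ∃ y ∈ Y, f = (1 : V → ℝ) + edgeVec x y := by
  obtain ⟨hdisj, huniv, hadjXY⟩ := hbip
  intro f hf hint
  set c : ℝ := (n : ℝ) + 1 with hc
  have hc0 : (0 : ℝ) < c := by positivity
  -- facts about the convex hull
  have hC : convexHull ℝ (edgeVecs G) ⊆
      {g : V → ℝ | (∀ v, 0 ≤ g v) ∧ (∑ u ∈ X, g u = 1) ∧ (∑ u ∈ Y, g u = 1)} := by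
    apply convexHull_min
    · rintro _ ⟨x, y, hxy, rfl⟩
      have hxny : x ≠ y := hxy.ne
      refine ⟨fun v => by unfold edgeVec; positivity, ?_, ?_⟩
      · rcases hadjXY x y hxy with ⟨hx1, hy1⟩ | ⟨hx1, hy1⟩ <;> rw [sum_edgeVec]
        · have hyX : y ∉ X := fun h => Finset.disjoint_left.1 hdisj h hy1
          simp [hx1, hyX]
        · have hxX : x ∉ X := fun h => Finset.disjoint_left.1 hdisj h hx1
          simp [hy1, hxX]
      · rcases hadjXY x y hxy with ⟨hx1, hy1⟩ | ⟨hx1, hy1⟩ <;> rw [sum_edgeVec]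
        · have hxY : x ∉ Y := fun h => Finset.disjoint_left.1 hdisj hx1 h
          simp [hy1, hxY]
        · have hyY : y ∉ Y := fun h => Finset.disjoint_left.1 hdisj hy1 h
          simp [hx1, hyY]
    · intro g hg h hh a b ha hb hab
      refine ⟨fun v => ?_, ?_, ?_⟩
      · have := hg.1 v; have := hh.1 v
        simp only [Pi.add_apply, Pi.smul_apply, smul_eq_mul]
        positivity
      · simp only [Pi.add_apply, Pi.smul_apply, smul_eq_mul, Finset.sum_add_distrib,
          ← Finset.mul_sum, hg.2.1, hh.2.1, mul_one, hab]
      · simp only [Pi.add_apply, Pi.smul_apply, smul_eq_mul, Finset.sum_add_distrib,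
          ← Finset.mul_sum, hg.2.2, hh.2.2, mul_one, hab]
  have hfs : f ∈ c • convexHull ℝ (edgeVecs G) := intrinsicInterior_subset hf
  obtain ⟨g, hg, hfg⟩ := hfs
  have hgC := hC hg
  have hfnn : ∀ v, 0 ≤ f v := by
    intro v
    rw [← hfg]
    exact mul_nonneg hc0.le (hgC.1 v)
  have hsumX : ∑ u ∈ X, f u = c := by
    rw [← hfg]
    simp only [Pi.smul_apply, smul_eq_mul, ← Finset.mul_sum, hgC.2.1, mul_one]
  have hsumY : ∑ u ∈ Y, f u = c := by
    rw [← hfg]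
    simp only [Pi.smul_apply, smul_eq_mul, ← Finset.mul_sum, hgC.2.2, mul_one]
  -- strict positivity
  have hpos : ∀ v, f v ≠ 0 := by
    intro v hv
    -- some edge exists
    have hne : (edgeVecs G).Nonempty := by
      by_contra h
      rw [Set.not_nonempty_iff_eq_empty] at h
      rw [h, convexHull_empty] at hg
      exact hg
    obtain ⟨e, a, b, hab, he⟩ := hne
    -- v has a neighbour
    have hnb : ∃ u, G.Adj v u := by
      by_contra hno
      push_neg at hno
      obtain ⟨w⟩ := hmc.1.preconnected v a
      cases w with
      | nil => exact hno b hab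
      | cons h _ => exact hno _ h
    obtain ⟨u, hu⟩ := hnb
    have hmemy : c • edgeVec v u ∈ c • convexHull ℝ (edgeVecs G) :=
      Set.smul_mem_smul_set (subset_convexHull ℝ _ ⟨v, u, hu, rfl⟩)
    obtain ⟨ε, hε, hmem⟩ := relint_beyond hf hmemy
    obtain ⟨g', hg', hfg'⟩ := hmem
    have hval := congrFun hfg' v
    have hev : edgeVec v u v = 1 := by simp [edgeVec, hu.ne]
    simp only [Pi.smul_apply, smul_eq_mul, Pi.add_apply, Pi.sub_apply, hev, hv] at hval
    have hg'v : 0 ≤ g' v := (hC hg').1 v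
    nlinarith
  -- integrality
  choose k hk using hint
  have hk1 : ∀ v, 1 ≤ k v := by
    intro v
    have h0 : (0 : ℝ) < (k v : ℝ) :=
      lt_of_le_of_ne (by rw [← hk v]; exact hfnn v) (by rw [← hk v]; exact (hpos v).symm)
    have : (0 : ℤ) < k v := by exact_mod_cast h0
    omega
  have hsX : ∑ u ∈ X, k u = (X.card : ℤ) + 1 := by
    have h1 : ((∑ u ∈ X, k u : ℤ) : ℝ) = (n : ℝ) + 1 := by
      push_cast
      rw [← Finset.sum_congr rfl (fun u _ => hk u)]
      exact hsumX
    rw [hX]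
    exact_mod_cast h1
  have hsY : ∑ u ∈ Y, k u = (Y.card : ℤ) + 1 := by
    have h1 : ((∑ u ∈ Y, k u : ℤ) : ℝ) = (n : ℝ) + 1 := by
      push_cast
      rw [← Finset.sum_congr rfl (fun u _ => hk u)]
      exact hsumY
    rw [hY]
    exact_mod_cast h1
  obtain ⟨x, hxX, hx2, hxrest⟩ := exists_two X k (fun v _ => hk1 v) hsX
  obtain ⟨y, hyY, hy2, hyrest⟩ := exists_two Y k (fun v _ => hk1 v) hsY
  refine ⟨x, hxX, y, hyY, ?_⟩
  have hxy : x ≠ y := fun h => Finset.disjoint_left.1 hdisj hxX (h ▸ hyY)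
  funext v
  simp only [Pi.add_apply, Pi.one_apply]
  have hv : v ∈ X ∨ v ∈ Y := by
    have h := Finset.mem_univ v
    rw [← huniv] at h
    simpa [Finset.mem_union] using h
  rcases hv with hvX | hvY
  · have hvy : v ≠ y := fun h => Finset.disjoint_left.1 hdisj hvX (h ▸ hyY)
    by_cases hvx : v = x
    · subst hvx
      rw [hk v, hx2]
      simp [edgeVec, hvy]
      norm_num
    · rw [hk v, hxrest v hvX hvx]
      simp [edgeVec, hvx, hvy]
  · have hvx : v ≠ x := fun h => Finset.disjoint_left.1 hdisj (h ▸ hxX) hvY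
    by_cases hvy : v = y
    · subst hvy
      rw [hk v, hy2]
      simp [edgeVec, hvx]
      norm_num
    · rw [hk v, hyrest v hvY hvy]
      simp [edgeVec, hvx, hvy]
end

section
/- Let G be a 2-connected bipartite graph with bipartition X ⊔ Y, and let (x, y) ∈ X × Y be a non-edge of G. Then there exists an acceptable set T ⊆ X with x ∈ T and y ∉ N_G(T). Specifically, one may take T to be the set of X-vertices in the connected component containing x of the induced subgraph on (X \ N_G(y)) ⊔ (Y \ {y}). -/
attribute [local instance] Classical.propDecidable

/-- The graph on `V` whose edges are the `G`-edges with both endpoints in `S`. -/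
private def subgr {V : Type*} (G : SimpleGraph V) (S : Set V) : SimpleGraph V where
  Adj a b := G.Adj a b ∧ a ∈ S ∧ b ∈ S
  symm := ⟨fun a b h => ⟨h.1.symm, h.2.2, h.2.1⟩⟩
  loopless := ⟨fun a h => G.loopless.irrefl a h.1⟩

private lemma reach_last {V : Type*} (H : SimpleGraph V) {a u : V} (w : H.Walk a u) :
    a = u ∨ ∃ t, H.Reachable a t ∧ H.Adj t u := by
  induction w with
  | nil => exact Or.inl rfl
  | @cons a c u h p ih =>
    rcases ih with rfl | ⟨t, ht, hadj⟩
    · exact Or.inr ⟨a, SimpleGraph.Reachable.refl a, h⟩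
    · exact Or.inr ⟨t, h.reachable.trans ht, hadj⟩

private lemma subgr_reach_mem {V : Type*} {G : SimpleGraph V} {S : Set V} {x v : V}
    (h : (subgr G S).Reachable x v) (hx : x ∈ S) : v ∈ S := by
  obtain ⟨w⟩ := h
  rcases reach_last _ w with rfl | ⟨t, _, hadj⟩
  · exact hx
  · exact hadj.2.2

private lemma lift1 {V : Type*} {G : SimpleGraph V} {S : Set V} {x : V}
    {a b : V} (w : (subgr G S).Walk a b) :
    ∀ (ha : (subgr G S).Reachable x a) (hb : (subgr G S).Reachable x b),
    (G.induce {v | (subgr G S).Reachable x v}).Reachable ⟨a, ha⟩ ⟨b, hb⟩ := by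
  induction w with
  | nil => intro ha hb; exact SimpleGraph.Reachable.refl _
  | @cons a c b h p ih =>
    intro ha hb
    have hc : (subgr G S).Reachable x c := ha.trans h.reachable
    have hadj : (G.induce {v | (subgr G S).Reachable x v}).Adj ⟨a, ha⟩ ⟨c, hc⟩ := h.1
    exact hadj.reachable.trans (ih hc hb)

private lemma induce_to_subgr {V : Type*} {G : SimpleGraph V} {S : Set V} {a b : S}
    (w : (G.induce S).Walk a b) : (subgr G S).Reachable (a : V) (b : V) := by
  induction w with
  | nil => exact SimpleGraph.Reachable.refl _
  | @cons u v b h p ih =>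
    exact (SimpleGraph.Adj.reachable (show (subgr G S).Adj u v from ⟨h, u.2, v.2⟩)).trans ih

private lemma lift2 {V : Type*} {G : SimpleGraph V} {S : Set V} {x y : V}
    (hS : ∀ v, v ∉ S → v ≠ y → G.Adj v y) (hxS : x ∈ S)
    (hyC : y ∉ {v | (subgr G S).Reachable x v}) {a z : V}
    (w : (subgr G {u | u ≠ y}).Walk a z) :
    ∀ (_ : z ∈ {v | (subgr G S).Reachable x v})
      (ha : a ∉ {v | (subgr G S).Reachable x v}),
    (G.induce ({v | (subgr G S).Reachable x v})ᶜ).Reachable ⟨a, ha⟩ ⟨y, hyC⟩ := by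
  induction w with
  | nil => intro hz ha; exact absurd hz ha
  | @cons a c b h p ih =>
    intro hz ha
    by_cases hc : c ∈ {v | (subgr G S).Reachable x v}
    · have hcS : c ∈ S := subgr_reach_mem hc hxS
      have haS : a ∉ S := fun hs =>
        ha (hc.trans (SimpleGraph.Adj.reachable ⟨h.1.symm, hcS, hs⟩))
      have hadj : (G.induce ({v | (subgr G S).Reachable x v})ᶜ).Adj ⟨a, ha⟩ ⟨y, hyC⟩ :=
        hS a haS h.2.1
      exact hadj.reachable
    · have hadj : (G.induce ({v | (subgr G S).Reachable x v})ᶜ).Adj ⟨a, ha⟩ ⟨c, hc⟩ := h.1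
      exact hadj.reachable.trans (ih hz hc)

theorem stmt10 {V : Type*} [Fintype V] (G : SimpleGraph V) (X Y : Finset V)
    (hbip : IsBipartition G X Y) (h2 : TwoConnected G)
    (x y : V) (hx : x ∈ X) (hy : y ∈ Y) (hxy : ¬ G.Adj x y) :
    ∃ T : Finset V, Acceptable G X Y T ∧ x ∈ T ∧ y ∉ nbhd G T := by
  obtain ⟨hd, hu, hadj⟩ := hbip
  have hXY : ∀ v : V, v ∈ X ↔ v ∉ Y := by
    intro v
    constructor
    · intro hv hv'; exact (Finset.disjoint_left.mp hd hv) hv'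
    · intro hv
      have : v ∈ X ∪ Y := hu ▸ Finset.mem_univ v
      rcases Finset.mem_union.mp this with h | h
      · exact h
      · exact absurd h hv
  have hxny : x ≠ y := fun h => ((hXY x).mp hx) (h ▸ hy)
  set S : Set V := {v | v ≠ y ∧ ¬ G.Adj v y} with hSdef
  set C : Set V := {v | (subgr G S).Reachable x v} with hCdef
  have hxS : x ∈ S := ⟨hxny, hxy⟩
  have hxC : x ∈ C := SimpleGraph.Reachable.refl x
  have hCS : ∀ v ∈ C, v ∈ S := fun v hv => subgr_reach_mem hv hxS
  have hyS : y ∉ S := fun h => h.1 rfl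
  have hyC : y ∉ C := fun h => hyS (hCS y h)
  -- no edges within Y
  have hYY : ∀ a b, a ∈ Y → b ∈ Y → ¬ G.Adj a b := by
    intro a b ha hb hab
    rcases hadj a b hab with ⟨h1, _⟩ | ⟨_, h2'⟩
    · exact ((hXY a).mp h1) ha
    · exact ((hXY b).mp h2') hb
  set T : Finset V := Finset.univ.filter (fun v => v ∈ C ∧ v ∈ X) with hTdef
  have hmemT : ∀ v, v ∈ T ↔ v ∈ C ∧ v ∈ X := by
    intro v; simp [hTdef]
  have hxT : x ∈ T := (hmemT x).mpr ⟨hxC, hx⟩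
  -- neighborhood characterization
  have hN : ∀ u, u ∈ nbhd G T ↔ u ∈ C ∧ u ∈ Y := by
    intro u
    constructor
    · intro hu
      obtain ⟨t, ht, htu⟩ := by simpa [nbhd] using hu
      obtain ⟨htC, htX⟩ := (hmemT t).mp ht
      have huY : u ∈ Y := by
        rcases hadj t u htu with ⟨_, h⟩ | ⟨h, _⟩
        · exact h
        · exact absurd h ((hXY t).mp htX)
      have huS : u ∈ S := by
        refine ⟨?_, hYY u y huY hy⟩
        rintro rfl
        exact (hCS t htC).2 htu
      exact ⟨htC.trans (SimpleGraph.Adj.reachable ⟨htu, hCS t htC, huS⟩), huY⟩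
    · rintro ⟨huC, huY⟩
      obtain ⟨w⟩ := huC
      rcases reach_last _ w with rfl | ⟨t, htC, htu⟩
      · exact absurd huY ((hXY x).mp hx)
      · have htX : t ∈ X := by
          rcases hadj t u htu.1 with ⟨h, _⟩ | ⟨_, h⟩
          · exact h
          · exact absurd huY ((hXY u).mp h)
        simp only [nbhd, Finset.mem_filter, Finset.mem_univ, true_and]
        exact ⟨t, (hmemT t).mpr ⟨htC, htX⟩, htu.1⟩
  have hyN : y ∉ nbhd G T := fun h => hyC ((hN y).mp h).1
  -- set identities
  have hset1 : (↑(T ∪ nbhd G T) : Set V) = C := by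
    ext v
    simp only [Finset.coe_union, Set.mem_union, Finset.mem_coe, hmemT, hN]
    constructor
    · rintro (⟨h, _⟩ | ⟨h, _⟩) <;> exact h
    · intro h
      rcases Finset.mem_union.mp (hu ▸ Finset.mem_univ v) with hv | hv
      · exact Or.inl ⟨h, hv⟩
      · exact Or.inr ⟨h, hv⟩
  have hset2 : (↑((X \ T) ∪ (Y \ nbhd G T)) : Set V) = Cᶜ := by
    ext v
    simp only [Finset.coe_union, Set.mem_union, Finset.coe_sdiff, Set.mem_diff,
      Finset.mem_coe, hmemT, hN, Set.mem_compl_iff]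
    constructor
    · rintro (⟨hvX, h⟩ | ⟨hvY, h⟩) <;> intro hvC
      · exact h ⟨hvC, hvX⟩
      · exact h ⟨hvC, hvY⟩
    · intro h
      rcases Finset.mem_union.mp (hu ▸ Finset.mem_univ v) with hv | hv
      · exact Or.inl ⟨hv, fun hc => h hc.1⟩
      · exact Or.inr ⟨hv, fun hc => h hc.1⟩
  -- connectivity of T ∪ N(T)
  have hconn1 : (G.induce (↑(T ∪ nbhd G T) : Set V)).Connected := by
    rw [hset1]
    haveI : Nonempty (↑C) := ⟨⟨x, hxC⟩⟩
    apply SimpleGraph.Connected.mk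
    rintro ⟨a, haC⟩ ⟨b, hbC⟩
    have ha' : (subgr G S).Reachable x a := haC
    have hb' : (subgr G S).Reachable x b := hbC
    exact (lift1 ha'.some hxC haC).symm.trans (lift1 hb'.some hxC hbC)
  -- neighbor of y
  have hSadj : ∀ v, v ∉ S → v ≠ y → G.Adj v y := by
    intro v hv hvy
    by_contra h
    exact hv ⟨hvy, h⟩
  obtain ⟨u, hyu⟩ : ∃ u, G.Adj y u := by
    obtain ⟨w⟩ := h2.1.preconnected y x
    cases w with
    | nil => exact absurd rfl hxny.symm
    | cons h p => exact ⟨_, h⟩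
  have huX : u ∈ X := by
    rcases hadj y u hyu with ⟨h, _⟩ | ⟨_, h⟩
    · exact absurd hy ((hXY y).mp h)
    · exact h
  have huC : u ∉ C := fun h => (hCS u h).2 hyu.symm
  have huT : u ∉ T := fun h => huC ((hmemT u).mp h).1
  -- connectivity of complement
  have hreachy : ∀ (v : V) (hv : v ∈ (Cᶜ : Set V)),
      (G.induce (Cᶜ : Set V)).Reachable ⟨v, hv⟩ ⟨y, hyC⟩ := by
    intro v hv
    by_cases hvy : v = y
    · subst hvy; exact SimpleGraph.Reachable.refl _
    · obtain ⟨w⟩ := (h2.2 y).preconnected ⟨v, hvy⟩ ⟨x, hxny⟩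
      exact lift2 hSadj hxS hyC (induce_to_subgr w).some hxC hv
  have hconn2 : (G.induce (↑((X \ T) ∪ (Y \ nbhd G T)) : Set V)).Connected := by
    rw [hset2]
    haveI : Nonempty (↑(Cᶜ : Set V)) := ⟨⟨y, hyC⟩⟩
    apply SimpleGraph.Connected.mk
    rintro ⟨a, ha⟩ ⟨b, hb⟩
    exact (hreachy a ha).trans (hreachy b hb).symm
  refine ⟨T, ⟨⟨x, hxT⟩, ?_, hconn1, hconn2, u, ?_, y, ?_, hyu.symm⟩, hxT, hyN⟩
  · intro v hv; exact ((hmemT v).mp hv).2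
  · exact Finset.mem_sdiff.mpr ⟨huX, huT⟩
  · exact Finset.mem_sdiff.mpr ⟨hy, hyN⟩
end

section
/- Let G be a 2-connected matching-covered bipartite graph with bipartition X ⊔ Y. Then the following are equivalent: (i) for every non-edge (x,y) ∈ X × Y there exists a tight acceptable set T ⊆ X with x ∈ T and y ∉ N_G(T); (ii) every acceptable subset of X and every acceptable subset of Y is tight. -/
attribute [local instance] Classical.propDecidable

namespace Aux

set_option linter.unusedSectionVars false

variable {V : Type*} [Fintype V] {G : SimpleGraph V}

def reachIn (G : SimpleGraph V) (s : Set V) (a b : V) : Prop :=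
  Relation.ReflTransGen (fun u v => u ∈ s ∧ v ∈ s ∧ G.Adj u v) a b

lemma reachIn_symm {s : Set V} {a b : V} (h : reachIn G s a b) : reachIn G s b a :=
  by
    induction h with
    | refl => exact Relation.ReflTransGen.refl
    | tail _ hstep ih => exact Relation.ReflTransGen.head ⟨hstep.2.1, hstep.1, hstep.2.2.symm⟩ ih

lemma reachIn_mono {s t : Set V} (hst : s ⊆ t) {a b : V} (h : reachIn G s a b) :
    reachIn G t a b := by
  induction h with
  | refl => exact Relation.ReflTransGen.refl
  | tail _ hstep ih => exact ih.tail ⟨hst hstep.1, hst hstep.2.1, hstep.2.2⟩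

lemma reachIn_mem_right {s : Set V} {a b : V} (h : reachIn G s a b) (ha : a ∈ s) : b ∈ s := by
  induction h with
  | refl => exact ha
  | tail _ hstep _ => exact hstep.2.1

lemma connected_induce_iff {s : Set V} :
    (G.induce s).Connected ↔ s.Nonempty ∧ ∀ a ∈ s, ∀ b ∈ s, reachIn G s a b := by
  constructor
  · intro h
    have hne : s.Nonempty := by
      have := h.nonempty
      obtain ⟨⟨a, ha⟩⟩ := this
      exact ⟨a, ha⟩
    refine ⟨hne, fun a ha b hb => ?_⟩
    have hr : (G.induce s).Reachable ⟨a, ha⟩ ⟨b, hb⟩ := h.preconnected _ _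
    rw [SimpleGraph.reachable_iff_reflTransGen] at hr
    have key : ∀ (p q : s), Relation.ReflTransGen (G.induce s).Adj p q →
        reachIn G s p q := by
      intro p q hpq
      induction hpq with
      | refl => exact Relation.ReflTransGen.refl
      | tail _ hstep ih =>
        exact ih.tail ⟨(by exact Subtype.coe_prop _), Subtype.coe_prop _, hstep⟩
    exact key _ _ hr
  · rintro ⟨⟨a₀, ha₀⟩, hreach⟩
    rw [SimpleGraph.connected_iff]
    refine ⟨?_, ⟨⟨a₀, ha₀⟩⟩⟩
    rintro ⟨a, ha⟩ ⟨b, hb⟩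
    have h := hreach a ha b hb
    rw [SimpleGraph.reachable_iff_reflTransGen]
    have key : ∀ c (_ : reachIn G s a c) (hc : c ∈ s),
        Relation.ReflTransGen (G.induce s).Adj ⟨a, ha⟩ ⟨c, hc⟩ := by
      intro c hac hc
      induction hac with
      | refl => exact Relation.ReflTransGen.refl
      | @tail u c' huc hstep ih =>
        exact (ih hstep.1).tail (by exact hstep.2.2)
    exact key b h hb

lemma exists_adj_mem_of_connected {s : Set V} (h : (G.induce s).Connected)
    {a b : V} (ha : a ∈ s) (hb : b ∈ s) (hab : a ≠ b) : ∃ c ∈ s, G.Adj a c := by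
  have hr := (connected_induce_iff.mp h).2 a ha b hb
  rcases (Relation.ReflTransGen.cases_head hr) with h1 | ⟨c, hstep, _⟩
  · exact absurd h1 hab
  · exact ⟨c, hstep.2.1, hstep.2.2⟩

lemma crossing {s K : Set V} (h : (G.induce s).Connected)
    {a b : V} (ha : a ∈ s) (haK : a ∈ K) (hb : b ∈ s) (hbK : b ∉ K) :
    ∃ u ∈ s, ∃ v ∈ s, u ∈ K ∧ v ∉ K ∧ G.Adj u v := by
  have hr := (connected_induce_iff.mp h).2 a ha b hb
  clear ha
  induction hr with
  | refl => exact absurd haK hbK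
  | @tail c d hcd hstep ih =>
    by_cases hcK : c ∈ K
    · exact ⟨c, hstep.1, d, hstep.2.1, hcK, hbK, hstep.2.2⟩
    · exact ih hstep.1 hcK

lemma closed_all {P : Set V} (hG : G.Connected) (hne : P.Nonempty)
    (hcl : ∀ p ∈ P, ∀ q, G.Adj p q → q ∈ P) : ∀ v, v ∈ P := by
  intro v
  obtain ⟨p, hp⟩ := hne
  have hr : G.Reachable p v := hG.preconnected p v
  rw [SimpleGraph.reachable_iff_reflTransGen] at hr
  induction hr with
  | refl => exact hp
  | tail _ hstep ih => exact hcl _ ih _ hstep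

lemma exists_adj_of_connected (hG : G.Connected) (hnt : Nontrivial V) (v : V) :
    ∃ w, G.Adj v w := by
  haveI := hnt
  obtain ⟨u, hu⟩ := exists_ne v
  have hr : G.Reachable v u := hG.preconnected v u
  rw [SimpleGraph.reachable_iff_reflTransGen] at hr
  rcases Relation.ReflTransGen.cases_head hr with h1 | ⟨c, hstep, _⟩
  · exact absurd h1.symm hu
  · exact ⟨c, hstep⟩

/-! ### nbhd lemmas -/

lemma mem_nbhd {A : Finset V} {y : V} : y ∈ nbhd G A ↔ ∃ x ∈ A, G.Adj x y := by
  simp [nbhd]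

lemma mem_nbhd_of_adj {A : Finset V} {x y : V} (hx : x ∈ A) (h : G.Adj x y) :
    y ∈ nbhd G A := mem_nbhd.mpr ⟨x, hx, h⟩

lemma nbhd_mono {A B : Finset V} (h : A ⊆ B) : nbhd G A ⊆ nbhd G B := by
  intro y hy
  obtain ⟨x, hx, hadj⟩ := mem_nbhd.mp hy
  exact mem_nbhd_of_adj (h hx) hadj

lemma nbhd_union (A B : Finset V) : nbhd G (A ∪ B) = nbhd G A ∪ nbhd G B := by
  ext y
  simp only [mem_nbhd, Finset.mem_union]
  constructor
  · rintro ⟨x, hx | hx, hadj⟩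
    · exact Or.inl ⟨x, hx, hadj⟩
    · exact Or.inr ⟨x, hx, hadj⟩
  · rintro (⟨x, hx, hadj⟩ | ⟨x, hx, hadj⟩)
    · exact ⟨x, Or.inl hx, hadj⟩
    · exact ⟨x, Or.inr hx, hadj⟩

lemma nbhd_inter_subset (A B : Finset V) : nbhd G (A ∩ B) ⊆ nbhd G A ∩ nbhd G B := by
  intro y hy
  obtain ⟨x, hx, hadj⟩ := mem_nbhd.mp hy
  rw [Finset.mem_inter] at hx ⊢
  exact ⟨mem_nbhd_of_adj hx.1 hadj, mem_nbhd_of_adj hx.2 hadj⟩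

/-! ### bipartition lemmas -/

variable {X Y : Finset V}

lemma bip_symm (h : IsBipartition G X Y) : IsBipartition G Y X :=
  ⟨h.1.symm, by rw [Finset.union_comm]; exact h.2.1,
    fun x y hxy => ((h.2.2 x y hxy).symm : _)⟩

lemma not_mem_Y (h : IsBipartition G X Y) {x : V} (hx : x ∈ X) : x ∉ Y :=
  fun hy => Finset.disjoint_left.mp h.1 hx hy

lemma mem_X_or_Y (h : IsBipartition G X Y) (v : V) : v ∈ X ∨ v ∈ Y := by
  have : v ∈ X ∪ Y := by rw [h.2.1]; exact Finset.mem_univ v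
  exact Finset.mem_union.mp this

lemma mem_Y_of_adj (h : IsBipartition G X Y) {x y : V} (hx : x ∈ X) (hadj : G.Adj x y) :
    y ∈ Y := by
  rcases h.2.2 x y hadj with ⟨_, hy⟩ | ⟨hx', _⟩
  · exact hy
  · exact absurd hx' (not_mem_Y h hx)

lemma nbhd_subset_Y (h : IsBipartition G X Y) {A : Finset V} (hA : A ⊆ X) :
    nbhd G A ⊆ Y := by
  intro y hy
  obtain ⟨x, hx, hadj⟩ := mem_nbhd.mp hy
  exact mem_Y_of_adj h (hA hx) hadj

/-! ### perfect matchings -/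

noncomputable def partner {M : G.Subgraph} (hM : M.IsPerfectMatching) (v : V) : V :=
  (hM.1 (hM.2 v)).choose

lemma partner_adj {M : G.Subgraph} (hM : M.IsPerfectMatching) (v : V) :
    M.Adj v (partner hM v) := (hM.1 (hM.2 v)).choose_spec.1

lemma eq_partner_of_adj {M : G.Subgraph} (hM : M.IsPerfectMatching) {v w : V}
    (h : M.Adj v w) : w = partner hM v := (hM.1 (hM.2 v)).choose_spec.2 w h

lemma card_X_eq_card_Y (hbip : IsBipartition G X Y) (hmc : MatchingCovered G)
    (hnt : Nontrivial V) : X.card = Y.card := by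
  obtain ⟨v, w, hadj⟩ : ∃ v w, G.Adj v w := by
    obtain ⟨w, hw⟩ := exists_adj_of_connected hmc.1 hnt (Classical.arbitrary V)
    exact ⟨_, _, hw⟩
  obtain ⟨M, hM, -⟩ := hmc.2 s(v, w) (G.mem_edgeSet.mpr hadj)
  refine Finset.card_bij (fun x _ => partner hM x) ?_ ?_ ?_
  · intro x hx
    exact mem_Y_of_adj hbip hx (M.adj_sub (partner_adj hM x))
  · intro x₁ hx₁ x₂ hx₂ heq
    have h1 : x₁ = partner hM (partner hM x₁) :=
      eq_partner_of_adj hM (partner_adj hM x₁).symm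
    have h2 : x₂ = partner hM (partner hM x₂) :=
      eq_partner_of_adj hM (partner_adj hM x₂).symm
    have heq' : partner hM x₁ = partner hM x₂ := heq
    rw [h1, h2, heq']
  · intro y hy
    refine ⟨partner hM y, ?_, ?_⟩
    · exact mem_Y_of_adj (bip_symm hbip) hy (M.adj_sub (partner_adj hM y))
    · exact (eq_partner_of_adj hM (partner_adj hM y).symm).symm

/-! ### surplus lemma -/

lemma hallPlus (hbip : IsBipartition G X Y) (hmc : MatchingCovered G) (hnt : Nontrivial V)
    {A : Finset V} (hne : A.Nonempty) (hAX : A ⊆ X) (hAne : A ≠ X) :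
    A.card + 1 ≤ (nbhd G A).card := by
  by_cases hedge : ∃ y₀ x', y₀ ∈ nbhd G A ∧ x' ∉ A ∧ G.Adj x' y₀
  · obtain ⟨y₀, x', hy₀, hx', hadj⟩ := hedge
    obtain ⟨M, hM, heM⟩ := hmc.2 s(x', y₀) (G.mem_edgeSet.mpr hadj)
    have hMadj : M.Adj x' y₀ := SimpleGraph.Subgraph.mem_edgeSet.mp heM
    have hsub : insert y₀ (A.image (partner hM)) ⊆ nbhd G A := by
      intro y hy
      rcases Finset.mem_insert.mp hy with rfl | hy
      · exact hy₀
      · obtain ⟨a, ha, rfl⟩ := Finset.mem_image.mp hy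
        exact mem_nbhd_of_adj ha (M.adj_sub (partner_adj hM a))
    have hy₀notmem : y₀ ∉ A.image (partner hM) := by
      intro hmem
      obtain ⟨a, ha, hpa⟩ := Finset.mem_image.mp hmem
      have h1 : M.Adj a y₀ := by rw [← hpa]; exact partner_adj hM a
      have h2 : a = partner hM y₀ := eq_partner_of_adj hM h1.symm
      have h3 : x' = partner hM y₀ := eq_partner_of_adj hM hMadj.symm
      exact hx' (by rwa [h3, ← h2])
    have hinj : Set.InjOn (partner hM) ↑A := by
      intro a₁ ha₁ a₂ ha₂ heq
      have h1 : a₁ = partner hM (partner hM a₁) :=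
        eq_partner_of_adj hM (partner_adj hM a₁).symm
      have h2 : a₂ = partner hM (partner hM a₂) :=
        eq_partner_of_adj hM (partner_adj hM a₂).symm
      rw [h1, h2, heq]
    calc A.card + 1 = (insert y₀ (A.image (partner hM))).card := by
          rw [Finset.card_insert_of_notMem hy₀notmem, Finset.card_image_of_injOn hinj]
      _ ≤ (nbhd G A).card := Finset.card_le_card hsub
  · push_neg at hedge
    exfalso
    obtain ⟨x₁, hx₁⟩ := Finset.exists_of_ssubset (hAX.ssubset_of_ne hAne)
    obtain ⟨a, ha⟩ := hne
    have hcl : ∀ p ∈ (↑(A ∪ nbhd G A) : Set V), ∀ q, G.Adj p q →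
        q ∈ (↑(A ∪ nbhd G A) : Set V) := by
      intro p hp q hq
      simp only [Finset.coe_union, Set.mem_union, Finset.mem_coe] at hp ⊢
      rcases hp with hp | hp
      · exact Or.inr (mem_nbhd_of_adj hp hq)
      · by_cases hqA : q ∈ A
        · exact Or.inl hqA
        · exact absurd hq.symm (hedge p q hp hqA)
    have hx₁mem := closed_all hmc.1 ⟨a, by
      simp only [Finset.coe_union, Set.mem_union, Finset.mem_coe]; exact Or.inl ha⟩ hcl x₁
    simp only [Finset.coe_union, Set.mem_union, Finset.mem_coe] at hx₁mem
    rcases hx₁mem with h | h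
    · exact hx₁.2 h
    · exact not_mem_Y hbip hx₁.1 (nbhd_subset_Y hbip hAX h)

lemma tight_union (hbip : IsBipartition G X Y) (hmc : MatchingCovered G) (hnt : Nontrivial V)
    {A B : Finset V} (hA : A ⊆ X) (hB : B ⊆ X) (hAne : A.Nonempty)
    (htA : Tight G A) (htB : Tight G B) (hU : A ∪ B ≠ X)
    (hmeet : (A ∩ B).Nonempty ∨ (nbhd G A ∩ nbhd G B).Nonempty) :
    Tight G (A ∪ B) := by
  have hUX : A ∪ B ⊆ X := Finset.union_subset hA hB
  have hlow := hallPlus hbip hmc hnt (hAne.mono Finset.subset_union_left) hUX hU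
  have hN : nbhd G (A ∪ B) = nbhd G A ∪ nbhd G B := nbhd_union A B
  rw [hN] at hlow
  have hcard1 : (nbhd G A ∪ nbhd G B).card + (nbhd G A ∩ nbhd G B).card
      = (nbhd G A).card + (nbhd G B).card := Finset.card_union_add_card_inter _ _
  have hcard2 : (A ∪ B).card + (A ∩ B).card = A.card + B.card :=
    Finset.card_union_add_card_inter _ _
  have e1 : (nbhd G A).card = A.card + 1 := htA
  have e2 : (nbhd G B).card = B.card + 1 := htB
  have goal : (nbhd G A ∪ nbhd G B).card = (A ∪ B).card + 1 := by
    by_cases h : (A ∩ B).Nonempty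
    · have hABX : A ∩ B ≠ X := by
        intro hEq
        exact hU (Finset.Subset.antisymm hUX (by
          rw [← hEq]
          exact Finset.inter_subset_left.trans Finset.subset_union_left))
      have h1 := hallPlus hbip hmc hnt h (Finset.inter_subset_left.trans hA) hABX
      have h2 : (nbhd G (A ∩ B)).card ≤ (nbhd G A ∩ nbhd G B).card :=
        Finset.card_le_card (nbhd_inter_subset A B)
      omega
    · have hb0 : A ∩ B = ∅ := Finset.not_nonempty_iff_eq_empty.mp h
      have hmeet' : (nbhd G A ∩ nbhd G B).Nonempty := hmeet.resolve_left h
      have h1 : 1 ≤ (nbhd G A ∩ nbhd G B).card := Finset.card_pos.mpr hmeet'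
      have hb0c : (A ∩ B).card = 0 := by rw [hb0, Finset.card_empty]
      omega
  show (nbhd G (A ∪ B)).card = (A ∪ B).card + 1
  rw [hN]; exact goal


/-! ### duality -/

lemma dual (hbip : IsBipartition G X Y) (hmc : MatchingCovered G) (hnt : Nontrivial V)
    {T : Finset V} (hT : Acceptable G X Y T) :
    Acceptable G Y X (Y \ nbhd G T) ∧ nbhd G (Y \ nbhd G T) = X \ T := by
  obtain ⟨hTne, hTX, hc1, hc2, x₁, hx₁, y₁, hy₁, hadj₁⟩ := hT
  have hNsubY : nbhd G T ⊆ Y := nbhd_subset_Y hbip hTX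
  set S := Y \ nbhd G T with hSdef
  have hSne : S.Nonempty := ⟨y₁, hy₁⟩
  have hSY : S ⊆ Y := Finset.sdiff_subset
  have hNS : nbhd G S = X \ T := by
    apply Finset.Subset.antisymm
    · intro w hw
      obtain ⟨s', hs', hadj⟩ := mem_nbhd.mp hw
      have hs'Y : s' ∈ Y := hSY hs'
      have hwX : w ∈ X := mem_Y_of_adj (bip_symm hbip) hs'Y hadj
      rw [Finset.mem_sdiff]
      refine ⟨hwX, fun hwT => ?_⟩
      have : s' ∈ nbhd G T := mem_nbhd_of_adj hwT hadj.symm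
      exact (Finset.mem_sdiff.mp hs').2 this
    · intro x' hx'
      have hx'X : x' ∈ X := (Finset.mem_sdiff.mp hx').1
      have hx'mem : (x' : V) ∈ (↑((X \ T) ∪ (Y \ nbhd G T)) : Set V) := by
        simp only [Finset.coe_union, Set.mem_union, Finset.mem_coe]
        exact Or.inl hx'
      have hy₁mem : (y₁ : V) ∈ (↑((X \ T) ∪ (Y \ nbhd G T)) : Set V) := by
        simp only [Finset.coe_union, Set.mem_union, Finset.mem_coe]
        exact Or.inr hy₁
      have hne' : x' ≠ y₁ := by
        intro hEq
        exact not_mem_Y hbip hx'X (hEq ▸ (Finset.mem_sdiff.mp hy₁).1)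
      obtain ⟨c, hc, hadj⟩ := exists_adj_mem_of_connected hc2 hx'mem hy₁mem hne'
      have hcY : c ∈ Y := mem_Y_of_adj hbip hx'X hadj
      have hcS : c ∈ S := by
        simp only [Finset.coe_union, Set.mem_union, Finset.mem_coe] at hc
        rcases hc with hc | hc
        · exact absurd hcY (not_mem_Y hbip (Finset.mem_sdiff.mp hc).1)
        · exact hc
      exact mem_nbhd_of_adj hcS hadj.symm
  refine ⟨⟨hSne, hSY, ?_, ?_, ?_⟩, hNS⟩
  · have hset : S ∪ nbhd G S = (X \ T) ∪ (Y \ nbhd G T) := by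
      rw [hNS, Finset.union_comm]
    rw [hset]
    exact hc2
  · have hset : (Y \ S) ∪ (X \ nbhd G S) = T ∪ nbhd G T := by
      rw [hNS, Finset.sdiff_sdiff_eq_self hNsubY, Finset.sdiff_sdiff_eq_self hTX,
        Finset.union_comm]
    rw [hset]
    exact hc1
  · obtain ⟨t₀, ht₀⟩ := hTne
    obtain ⟨w, hw⟩ := exists_adj_of_connected hmc.1 hnt t₀
    refine ⟨w, ?_, t₀, ?_, hw.symm⟩
    · rw [hSdef, Finset.sdiff_sdiff_eq_self hNsubY]
      exact mem_nbhd_of_adj ht₀ hw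
    · rw [hNS, Finset.sdiff_sdiff_eq_self hTX]
      exact ht₀


/-! ### construction of acceptable sets -/

lemma exists_acceptable (hbip : IsBipartition G X Y) (hG : G.Connected) (hnt : Nontrivial V)
    {x y : V} (hx : x ∈ X) (hy : y ∈ Y) (hxy : ¬ G.Adj x y) :
    ∃ T : Finset V, Acceptable G X Y T ∧ x ∈ T ∧ y ∉ nbhd G T := by
  classical
  set Ny : Finset V := nbhd G {y} with hNydef
  have hNyX : Ny ⊆ X := by
    intro w hw
    obtain ⟨a, ha, hadj⟩ := mem_nbhd.mp hw
    rw [Finset.mem_singleton] at ha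
    subst ha
    exact mem_Y_of_adj (bip_symm hbip) hy hadj
  have hadjNy : ∀ w ∈ Ny, G.Adj y w := by
    intro w hw
    obtain ⟨a, ha, hadj⟩ := mem_nbhd.mp hw
    rw [Finset.mem_singleton] at ha
    exact ha ▸ hadj
  set W : Finset V := X \ Ny with hWdef
  have hxW : x ∈ W := by
    rw [hWdef, Finset.mem_sdiff]
    exact ⟨hx, fun hxN => hxy (hadjNy x hxN).symm⟩
  set s₀ : Set V := ↑(W ∪ nbhd G W) with hs₀def
  have hWs₀ : ∀ v ∈ W, v ∈ s₀ := fun v hv => by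
    simp only [hs₀def, Finset.coe_union, Set.mem_union, Finset.mem_coe]; exact Or.inl hv
  have hNWs₀ : ∀ v ∈ nbhd G W, v ∈ s₀ := fun v hv => by
    simp only [hs₀def, Finset.coe_union, Set.mem_union, Finset.mem_coe]; exact Or.inr hv
  have hs₀cases : ∀ v ∈ s₀, v ∈ W ∨ v ∈ nbhd G W := fun v hv => by
    simpa only [hs₀def, Finset.coe_union, Set.mem_union, Finset.mem_coe] using hv
  set c : V → Prop := fun v => reachIn G s₀ x v with hcdef
  set T : Finset V := W.filter c with hTdef
  have hWX : W ⊆ X := Finset.sdiff_subset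
  have hTW : T ⊆ W := Finset.filter_subset _ _
  have hTX : T ⊆ X := hTW.trans hWX
  have hxT : x ∈ T := by
    rw [hTdef, Finset.mem_filter]
    exact ⟨hxW, Relation.ReflTransGen.refl⟩
  have hNWY : nbhd G W ⊆ Y := nbhd_subset_Y hbip hWX
  have hNT : nbhd G T = (nbhd G W).filter c := by
    ext y'
    constructor
    · intro hy'
      obtain ⟨t, ht, hadj⟩ := mem_nbhd.mp hy'
      rw [hTdef, Finset.mem_filter] at ht
      rw [Finset.mem_filter]
      refine ⟨mem_nbhd_of_adj ht.1 hadj, ?_⟩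
      exact ht.2.tail ⟨hWs₀ t ht.1, hNWs₀ y' (mem_nbhd_of_adj ht.1 hadj), hadj⟩
    · intro hy'
      rw [Finset.mem_filter] at hy'
      obtain ⟨hy'N, hy'c⟩ := hy'
      have hy'Y : y' ∈ Y := hNWY hy'N
      rcases Relation.ReflTransGen.cases_tail hy'c with hEq | ⟨u, hu, hstep⟩
      · exact absurd (hEq ▸ hy'Y) (not_mem_Y hbip hx)
      · have huX : u ∈ X := by
          rcases hbip.2.2 u y' hstep.2.2 with ⟨h1, _⟩ | ⟨_, h2⟩
          · exact h1
          · exact absurd hy'Y (not_mem_Y hbip h2)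
        have huW : u ∈ W := by
          rcases hs₀cases u hstep.1 with h | h
          · exact h
          · exact absurd (hNWY h) (not_mem_Y hbip huX)
        exact mem_nbhd_of_adj (by rw [hTdef, Finset.mem_filter]; exact ⟨huW, hu⟩) hstep.2.2
  have hyNT : y ∉ nbhd G T := by
    intro hmem
    obtain ⟨t, ht, hadj⟩ := mem_nbhd.mp (nbhd_mono hTW hmem)
    have : t ∈ Ny := mem_nbhd_of_adj (Finset.mem_singleton_self y) hadj.symm
    exact (Finset.mem_sdiff.mp ht).2 this
  -- connectivity of T ∪ N(T)
  set s₁ : Set V := ↑(T ∪ nbhd G T) with hs₁def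
  have hmem_s₁ : ∀ v ∈ s₀, c v → v ∈ s₁ := by
    intro v hv hcv
    simp only [hs₁def, Finset.coe_union, Set.mem_union, Finset.mem_coe]
    rcases hs₀cases v hv with h | h
    · exact Or.inl (by rw [hTdef, Finset.mem_filter]; exact ⟨h, hcv⟩)
    · exact Or.inr (by rw [hNT, Finset.mem_filter]; exact ⟨h, hcv⟩)
  have hstrength : ∀ v, reachIn G s₀ x v → reachIn G s₁ x v := by
    intro v hv
    induction hv with
    | refl => exact Relation.ReflTransGen.refl
    | @tail u w hxu hstep ih =>
      exact ih.tail ⟨hmem_s₁ u hstep.1 hxu, hmem_s₁ w hstep.2.1 (hxu.tail hstep), hstep.2.2⟩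
  have hs₁c : ∀ v ∈ s₁, c v ∧ v ∈ s₀ := by
    intro v hv
    simp only [hs₁def, Finset.coe_union, Set.mem_union, Finset.mem_coe] at hv
    rcases hv with h | h
    · rw [hTdef, Finset.mem_filter] at h
      exact ⟨h.2, hWs₀ v h.1⟩
    · rw [hNT, Finset.mem_filter] at h
      exact ⟨h.2, hNWs₀ v h.1⟩
  have hcon1 : (G.induce s₁).Connected := by
    rw [connected_induce_iff]
    refine ⟨⟨x, hmem_s₁ x (hWs₀ x hxW) Relation.ReflTransGen.refl⟩, fun a ha b hb => ?_⟩
    exact (reachIn_symm (hstrength a (hs₁c a ha).1)).trans (hstrength b (hs₁c b hb).1)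
  -- connectivity of (X\T) ∪ (Y\N(T))
  set D : Set V := ↑((X \ T) ∪ (Y \ nbhd G T)) with hDdef
  have hDcases : ∀ v ∈ D, v ∈ X \ T ∨ v ∈ Y \ nbhd G T := fun v hv => by
    simpa only [hDdef, Finset.coe_union, Set.mem_union, Finset.mem_coe] using hv
  have hXTD : ∀ v ∈ X \ T, v ∈ D := fun v hv => by
    simp only [hDdef, Finset.coe_union, Set.mem_union, Finset.mem_coe]; exact Or.inl hv
  have hYND : ∀ v ∈ Y \ nbhd G T, v ∈ D := fun v hv => by
    simp only [hDdef, Finset.coe_union, Set.mem_union, Finset.mem_coe]; exact Or.inr hv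
  have hyD : y ∈ D := hYND y (Finset.mem_sdiff.mpr ⟨hy, hyNT⟩)
  have hNyD : ∀ z ∈ Ny, z ∈ D := by
    intro z hz
    refine hXTD z (Finset.mem_sdiff.mpr ⟨hNyX hz, fun hzT => ?_⟩)
    exact (Finset.mem_sdiff.mp (hTW hzT)).2 hz
  have hNy_step : ∀ z ∈ Ny, reachIn G D z y :=
    fun z hz => Relation.ReflTransGen.single ⟨hNyD z hz, hyD, (hadjNy z hz).symm⟩
  -- case C helper
  have hcaseC : ∀ v ∈ s₀, ¬ c v → reachIn G D v y := by
    intro v hvs₀ hvc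
    set Q : Set V := {u | u ∈ s₀ ∧ reachIn G s₀ v u} with hQdef
    have hvQ : v ∈ Q := ⟨hvs₀, Relation.ReflTransGen.refl⟩
    have hQnotc : ∀ u ∈ Q, ¬ c u := by
      rintro u ⟨hus₀, hvu⟩ hcu
      exact hvc (hcu.trans (reachIn_symm hvu))
    have hQD : Q ⊆ D := by
      rintro u ⟨hus₀, hvu⟩
      rcases hs₀cases u hus₀ with h | h
      · refine hXTD u (Finset.mem_sdiff.mpr ⟨hWX h, fun huT => ?_⟩)
        exact hQnotc u ⟨hus₀, hvu⟩ (Finset.mem_filter.mp huT).2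
      · refine hYND u (Finset.mem_sdiff.mpr ⟨hNWY h, fun huN => ?_⟩)
        exact hQnotc u ⟨hus₀, hvu⟩ (Finset.mem_filter.mp (hNT ▸ huN)).2
    have hexit : ∃ u ∈ Q, ∃ z ∈ Ny, G.Adj u z := by
      by_contra hno
      push_neg at hno
      have hcl : ∀ p ∈ Q, ∀ q, G.Adj p q → q ∈ Q := by
        rintro p ⟨hps₀, hvp⟩ q hadj
        have hstep : q ∈ s₀ → q ∈ Q :=
          fun hq => ⟨hq, hvp.tail ⟨hps₀, hq, hadj⟩⟩
        rcases mem_X_or_Y hbip q with hqX | hqY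
        · by_cases hqW : q ∈ W
          · exact hstep (hWs₀ q hqW)
          · have hqNy : q ∈ Ny := by
              by_contra hqNy
              exact hqW (Finset.mem_sdiff.mpr ⟨hqX, hqNy⟩)
            exact absurd hadj (hno p ⟨hps₀, hvp⟩ q hqNy)
        · have hpX : p ∈ X := by
            rcases hbip.2.2 p q hadj with ⟨h1, _⟩ | ⟨_, h2⟩
            · exact h1
            · exact absurd hqY (not_mem_Y hbip h2)
          have hpW : p ∈ W := by
            rcases hs₀cases p hps₀ with h | h
            · exact h
            · exact absurd (hNWY h) (not_mem_Y hbip hpX)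
          exact hstep (hNWs₀ q (mem_nbhd_of_adj hpW hadj))
      have hall := closed_all hG ⟨v, hvQ⟩ hcl x
      exact hQnotc x hall Relation.ReflTransGen.refl
    obtain ⟨u, huQ, z, hzNy, hadj⟩ := hexit
    have hprefix : ∀ w, reachIn G s₀ v w → reachIn G Q v w := by
      intro w hw
      induction hw with
      | refl => exact Relation.ReflTransGen.refl
      | @tail a b hva hstep ih =>
        exact ih.tail ⟨⟨hstep.1, hva⟩, ⟨hstep.2.1, hva.tail hstep⟩, hstep.2.2⟩
    have h1 : reachIn G D v u := reachIn_mono hQD (hprefix u huQ.2)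
    have h2 : reachIn G D u y :=
      (Relation.ReflTransGen.single ⟨hQD huQ, hNyD z hzNy, hadj⟩).trans (hNy_step z hzNy)
    exact h1.trans h2
  have hmain : ∀ v ∈ D, reachIn G D v y := by
    intro v hvD
    rcases hDcases v hvD with hv | hv
    · rw [Finset.mem_sdiff] at hv
      by_cases hvNy : v ∈ Ny
      · exact hNy_step v hvNy
      · have hvW : v ∈ W := Finset.mem_sdiff.mpr ⟨hv.1, hvNy⟩
        have hvc : ¬ c v := fun hc => hv.2 (Finset.mem_filter.mpr ⟨hvW, hc⟩)
        exact hcaseC v (hWs₀ v hvW) hvc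
    · rw [Finset.mem_sdiff] at hv
      by_cases hvNW : v ∈ nbhd G W
      · have hvc : ¬ c v := fun hc => hv.2 (by rw [hNT]; exact Finset.mem_filter.mpr ⟨hvNW, hc⟩)
        exact hcaseC v (hNWs₀ v hvNW) hvc
      · by_cases hvy : v = y
        · exact hvy ▸ Relation.ReflTransGen.refl
        · obtain ⟨u, hadj⟩ := exists_adj_of_connected hG hnt v
          have huX : u ∈ X := by
            rcases hbip.2.2 v u hadj with ⟨h1, _⟩ | ⟨_, h2⟩
            · exact absurd hv.1 (not_mem_Y hbip h1)
            · exact h2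
          have huNy : u ∈ Ny := by
            by_contra huNy
            exact hvNW (mem_nbhd_of_adj (Finset.mem_sdiff.mpr ⟨huX, huNy⟩ : u ∈ W) hadj.symm)
          exact (Relation.ReflTransGen.single
            ⟨hYND v (Finset.mem_sdiff.mpr hv), hNyD u huNy, hadj⟩).trans (hNy_step u huNy)
  have hcon2 : (G.induce D).Connected := by
    rw [connected_induce_iff]
    exact ⟨⟨y, hyD⟩, fun a ha b hb => (hmain a ha).trans (reachIn_symm (hmain b hb))⟩
  obtain ⟨z₀, hz₀⟩ := exists_adj_of_connected hG hnt y
  have hz₀Ny : z₀ ∈ Ny := mem_nbhd_of_adj (Finset.mem_singleton_self y) hz₀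
  have hz₀XT : z₀ ∈ X \ T := by
    refine Finset.mem_sdiff.mpr ⟨hNyX hz₀Ny, fun hzT => ?_⟩
    exact (Finset.mem_sdiff.mp (hTW hzT)).2 hz₀Ny
  refine ⟨T, ⟨⟨x, hxT⟩, hTX, hcon1, hcon2, z₀, hz₀XT,
    y, Finset.mem_sdiff.mpr ⟨hy, hyNT⟩, hz₀.symm⟩, hxT, hyNT⟩


lemma not_adj_of_both (h : IsBipartition G X Y) {a b : V} (ha : a ∈ X) (hb : b ∈ X) :
    ¬ G.Adj a b := by
  intro hadj
  rcases h.2.2 a b hadj with ⟨_, h2⟩ | ⟨h2, _⟩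
  · exact not_mem_Y h hb h2
  · exact not_mem_Y h ha h2

lemma nontrivial_of_two (h2 : TwoConnected G) : Nontrivial V := by
  have hne : Nonempty V := h2.1.nonempty
  obtain ⟨v⟩ := hne
  obtain ⟨⟨u, hu⟩⟩ := (h2.2 v).nonempty
  exact ⟨u, v, hu⟩

/-! ### the forward direction: (i) implies tightness of acceptable subsets of X -/

lemma acceptable_tight_of_sep (hbip : IsBipartition G X Y) (hmc : MatchingCovered G)
    (hnt : Nontrivial V)
    (hsep : ∀ x ∈ X, ∀ y ∈ Y, ¬ G.Adj x y →
        ∃ T : Finset V, Acceptable G X Y T ∧ Tight G T ∧ x ∈ T ∧ y ∉ nbhd G T)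
    {T : Finset V} (hT : Acceptable G X Y T) : Tight G T := by
  classical
  obtain ⟨hdualS, hNS⟩ := dual hbip hmc hnt hT
  obtain ⟨hTne, hTX, hc1, hc2, x₁, hx₁, y₁, hy₁, hadj₁⟩ := hT
  set S : Finset V := Y \ nbhd G T with hSdef
  have hNTY : nbhd G T ⊆ Y := nbhd_subset_Y hbip hTX
  have hSY : S ⊆ Y := Finset.sdiff_subset
  have hcardXY : X.card = Y.card := card_X_eq_card_Y hbip hmc hnt
  obtain ⟨t₀, ht₀⟩ := hTne
  obtain ⟨w₀, hw₀⟩ := exists_adj_of_connected hmc.1 hnt t₀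
  have hw₀NT : w₀ ∈ nbhd G T := mem_nbhd_of_adj ht₀ hw₀
  have hyY : ∀ y ∈ S, y ∈ Y := fun y hy => hSY hy
  have noAdjT : ∀ y ∈ S, ∀ t ∈ T, ¬ G.Adj t y := by
    intro y hy t ht hadj
    exact (Finset.mem_sdiff.mp hy).2 (mem_nbhd_of_adj ht hadj)
  have hynbX : ∀ y : V, y ∈ Y → ∃ z ∈ X, G.Adj y z := by
    intro y hy
    obtain ⟨z, hz⟩ := exists_adj_of_connected hmc.1 hnt y
    exact ⟨z, mem_Y_of_adj (bip_symm hbip) hy hz, hz⟩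
  -- Step 1 : every y ∈ S avoids the neighbourhood of some tight superset of T
  have claim1 : ∀ y ∈ S, ∃ M : Finset V, M ⊆ X ∧ Tight G M ∧ T ⊆ M ∧ y ∉ nbhd G M := by
    intro y hyS
    have hyYmem : y ∈ Y := hyY y hyS
    set P : Finset V → Prop :=
      fun U => U ⊆ X ∧ U.Nonempty ∧ Tight G U ∧ y ∉ nbhd G U ∧ (U ∩ T).Nonempty with hPdef
    set fam : Finset (Finset V) := Finset.univ.powerset.filter P with hfamdef
    have hmemfam : ∀ U, U ∈ fam ↔ P U := by
      intro U
      rw [hfamdef, Finset.mem_filter]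
      simp [Finset.mem_powerset]
    have hfamne : fam.Nonempty := by
      obtain ⟨T₀, hT₀acc, hT₀tight, hT₀mem, hT₀y⟩ :=
        hsep t₀ (hTX ht₀) y hyYmem (noAdjT y hyS t₀ ht₀)
      exact ⟨T₀, (hmemfam T₀).mpr ⟨hT₀acc.2.1, hT₀acc.1, hT₀tight, hT₀y,
        ⟨t₀, Finset.mem_inter.mpr ⟨hT₀mem, ht₀⟩⟩⟩⟩
    obtain ⟨U, hUfam, hUmax⟩ := Finset.exists_max_image fam Finset.card hfamne
    obtain ⟨hUX, hUne, hUtight, hUy, hUT⟩ := (hmemfam U).mp hUfam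
    refine ⟨U, hUX, hUtight, ?_, hUy⟩
    by_contra hTU
    obtain ⟨t, htT, htU⟩ : ∃ t ∈ T, t ∉ U := by
      by_contra hall
      push_neg at hall
      exact hTU hall
    obtain ⟨a₀, ha₀⟩ := hUT
    rw [Finset.mem_inter] at ha₀
    set K : Set V := ↑((T ∩ U) ∪ (nbhd G T ∩ nbhd G U)) with hKdef
    have hKmem : ∀ v, v ∈ K ↔ v ∈ T ∩ U ∨ v ∈ nbhd G T ∩ nbhd G U := by
      intro v
      simp only [hKdef, Finset.coe_union, Set.mem_union, Finset.mem_coe]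
    have hsmem : ∀ v, v ∈ (↑(T ∪ nbhd G T) : Set V) ↔ v ∈ T ∨ v ∈ nbhd G T := by
      intro v
      simp only [Finset.coe_union, Set.mem_union, Finset.mem_coe]
    have ha₀s : (a₀ : V) ∈ (↑(T ∪ nbhd G T) : Set V) := (hsmem a₀).mpr (Or.inl ha₀.2)
    have ha₀K : (a₀ : V) ∈ K := (hKmem a₀).mpr (Or.inl (Finset.mem_inter.mpr ⟨ha₀.2, ha₀.1⟩))
    have hts : (t : V) ∈ (↑(T ∪ nbhd G T) : Set V) := (hsmem t).mpr (Or.inl htT)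
    have htK : (t : V) ∉ K := by
      rw [hKmem]
      push_neg
      constructor
      · rw [Finset.mem_inter]; exact fun h => htU h.2
      · rw [Finset.mem_inter]
        exact fun h => not_mem_Y hbip (hTX htT) (hNTY h.1)
    obtain ⟨u, hus, w, hws, huK, hwK, huw⟩ := crossing hc1 ha₀s ha₀K hts htK
    rcases (hKmem u).mp huK with huTU | huNN
    · -- u ∈ T ∩ U : impossible crossing
      rw [Finset.mem_inter] at huTU
      have hwY : w ∈ nbhd G T := by
        rcases (hsmem w).mp hws with h | h
        · exact absurd huw (not_adj_of_both hbip (hTX huTU.1) (hTX h))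
        · exact h
      exact hwK ((hKmem w).mpr (Or.inr (Finset.mem_inter.mpr
        ⟨hwY, mem_nbhd_of_adj huTU.2 huw⟩)))
    · rw [Finset.mem_inter] at huNN
      have hwT : w ∈ T := by
        rcases (hsmem w).mp hws with h | h
        · exact h
        · exact absurd huw (not_adj_of_both (bip_symm hbip) (hNTY huNN.1) (hNTY h))
      have hwU : w ∉ U := fun hwU => hwK ((hKmem w).mpr
        (Or.inl (Finset.mem_inter.mpr ⟨hwT, hwU⟩)))
      obtain ⟨Tw, hTwacc, hTwtight, hTwmem, hTwy⟩ :=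
        hsep w (hTX hwT) y hyYmem (noAdjT y hyS w hwT)
      have hunion_ne : U ∪ Tw ≠ X := by
        intro hEq
        obtain ⟨z, hzX, hzadj⟩ := hynbX y hyYmem
        rw [← hEq, Finset.mem_union] at hzX
        rcases hzX with h | h
        · exact hUy (mem_nbhd_of_adj h hzadj.symm)
        · exact hTwy (mem_nbhd_of_adj h hzadj.symm)
      have hmeet : ((U ∩ Tw).Nonempty ∨ (nbhd G U ∩ nbhd G Tw).Nonempty) :=
        Or.inr ⟨u, Finset.mem_inter.mpr ⟨huNN.2, mem_nbhd_of_adj hTwmem huw.symm⟩⟩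
      have hbig : Tight G (U ∪ Tw) :=
        tight_union hbip hmc hnt hUX hTwacc.2.1 hUne hUtight hTwtight hunion_ne hmeet
      have hbigfam : U ∪ Tw ∈ fam := by
        rw [hmemfam]
        refine ⟨Finset.union_subset hUX hTwacc.2.1, hUne.mono Finset.subset_union_left,
          hbig, ?_, ⟨a₀, Finset.mem_inter.mpr ⟨Finset.mem_union_left _ ha₀.1, ha₀.2⟩⟩⟩
        rw [nbhd_union, Finset.mem_union]
        push_neg
        exact ⟨hUy, hTwy⟩
      have hlt : U.card < (U ∪ Tw).card :=
        Finset.card_lt_card ⟨Finset.subset_union_left, fun hsub =>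
          hwU (hsub (Finset.mem_union_right U hTwmem))⟩
      exact absurd (hUmax _ hbigfam) (not_le.mpr hlt)
  -- Step 2 : tight subsets of S around each vertex of S
  have claim2 : ∀ y ∈ S, ∃ Sy : Finset V,
      y ∈ Sy ∧ Sy ⊆ S ∧ Tight G Sy ∧ nbhd G Sy ⊆ X \ T := by
    intro y hyS
    obtain ⟨M, hMX, hMtight, hTM, hyM⟩ := claim1 y hyS
    have hMne : M.Nonempty := ⟨t₀, hTM ht₀⟩
    set Sy : Finset V := Y \ nbhd G M with hSydef
    have hNMY : nbhd G M ⊆ Y := nbhd_subset_Y hbip hMX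
    have hySy : y ∈ Sy := Finset.mem_sdiff.mpr ⟨hyY y hyS, hyM⟩
    have hSyS : Sy ⊆ S := by
      rw [hSydef, hSdef]
      exact Finset.sdiff_subset_sdiff le_rfl (nbhd_mono hTM)
    have hsub : nbhd G Sy ⊆ X \ M := by
      intro z hz
      obtain ⟨s', hs', hadj⟩ := mem_nbhd.mp hz
      rw [Finset.mem_sdiff]
      refine ⟨mem_Y_of_adj (bip_symm hbip) ((Finset.mem_sdiff.mp hs').1) hadj, fun hzM => ?_⟩
      exact (Finset.mem_sdiff.mp hs').2 (mem_nbhd_of_adj hzM hadj.symm)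
    refine ⟨Sy, hySy, hSyS, ?_, hsub.trans (Finset.sdiff_subset_sdiff le_rfl hTM)⟩
    -- tightness of Sy
    obtain ⟨m₀, hm₀⟩ := hMne
    obtain ⟨w₁, hw₁⟩ := exists_adj_of_connected hmc.1 hnt m₀
    have hw₁NM : w₁ ∈ nbhd G M := mem_nbhd_of_adj hm₀ hw₁
    have hSyneY : Sy ≠ Y := by
      intro hEq
      exact (Finset.mem_sdiff.mp (hEq ▸ (hNMY hw₁NM) : w₁ ∈ Sy)).2 hw₁NM
    have hlow := hallPlus (bip_symm hbip) hmc hnt ⟨y, hySy⟩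
      (Finset.sdiff_subset : Sy ⊆ Y) hSyneY
    have hup : (nbhd G Sy).card ≤ (X \ M).card := Finset.card_le_card hsub
    have e1 : (X \ M).card = X.card - M.card := Finset.card_sdiff_of_subset hMX
    have e2 : Sy.card = Y.card - (nbhd G M).card := Finset.card_sdiff_of_subset hNMY
    have e3 : (nbhd G M).card = M.card + 1 := hMtight
    have e4 : M.card ≤ X.card := Finset.card_le_card hMX
    have e5 : (nbhd G M).card ≤ Y.card := Finset.card_le_card hNMY
    show (nbhd G Sy).card = Sy.card + 1
    omega
  -- Step 3 : S itself is tight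
  have hStight : Tight G S := by
    set P' : Finset V → Prop :=
      fun U => U ⊆ S ∧ U.Nonempty ∧ Tight G U ∧ nbhd G U ⊆ X \ T with hP'def
    set fam' : Finset (Finset V) := Finset.univ.powerset.filter P' with hfam'def
    have hmemfam' : ∀ U, U ∈ fam' ↔ P' U := by
      intro U
      rw [hfam'def, Finset.mem_filter]
      simp [Finset.mem_powerset]
    have hfam'ne : fam'.Nonempty := by
      obtain ⟨Sy, hySy, hSyS, hSytight, hSysub⟩ := claim2 y₁ hy₁
      exact ⟨Sy, (hmemfam' Sy).mpr ⟨hSyS, ⟨y₁, hySy⟩, hSytight, hSysub⟩⟩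
    obtain ⟨U, hUfam, hUmax⟩ := Finset.exists_max_image fam' Finset.card hfam'ne
    obtain ⟨hUS, hUne, hUtight, hUsub⟩ := (hmemfam' U).mp hUfam
    have hUeqS : U = S := by
      apply Finset.Subset.antisymm hUS
      by_contra hSU
      obtain ⟨y₂, hy₂S, hy₂U⟩ : ∃ y₂ ∈ S, y₂ ∉ U := by
        by_contra hall
        push_neg at hall
        exact hSU hall
      set K : Set V := ↑(U ∪ nbhd G U) with hKdef
      have hKmem : ∀ v, v ∈ K ↔ v ∈ U ∨ v ∈ nbhd G U := by
        intro v
        simp only [hKdef, Finset.coe_union, Set.mem_union, Finset.mem_coe]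
      have hsmem : ∀ v, v ∈ (↑((X \ T) ∪ (Y \ nbhd G T)) : Set V) ↔
          v ∈ X \ T ∨ v ∈ S := by
        intro v
        simp only [Finset.coe_union, Set.mem_union, Finset.mem_coe, hSdef]
      obtain ⟨a₀, ha₀⟩ := hUne
      have ha₀s : (a₀ : V) ∈ (↑((X \ T) ∪ (Y \ nbhd G T)) : Set V) :=
        (hsmem a₀).mpr (Or.inr (hUS ha₀))
      have ha₀K : (a₀ : V) ∈ K := (hKmem a₀).mpr (Or.inl ha₀)
      have hy₂s : (y₂ : V) ∈ (↑((X \ T) ∪ (Y \ nbhd G T)) : Set V) :=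
        (hsmem y₂).mpr (Or.inr hy₂S)
      have hy₂K : (y₂ : V) ∉ K := by
        rw [hKmem]
        push_neg
        refine ⟨hy₂U, fun hmem => ?_⟩
        exact not_mem_Y hbip (Finset.mem_sdiff.mp (hUsub hmem)).1 (hyY y₂ hy₂S)
      obtain ⟨u, hus, w, hws, huK, hwK, huw⟩ := crossing hc2 ha₀s ha₀K hy₂s hy₂K
      rcases (hKmem u).mp huK with huU | huN
      · -- u ∈ U ⊆ Y, so w ∈ X-side hence in nbhd U : contradiction
        have huY : u ∈ Y := hyY u (hUS huU)
        have hwX : w ∈ X := mem_Y_of_adj (bip_symm hbip) huY huw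
        exact hwK ((hKmem w).mpr (Or.inr (mem_nbhd_of_adj huU huw)))
      · have huX : u ∈ X := (Finset.mem_sdiff.mp (hUsub huN)).1
        have hwS : w ∈ S := by
          rcases (hsmem w).mp hws with h | h
          · exact absurd huw (not_adj_of_both hbip huX (Finset.mem_sdiff.mp h).1)
          · exact h
        have hwU : w ∉ U := fun hwU => hwK ((hKmem w).mpr (Or.inl hwU))
        obtain ⟨Sw, hwSw, hSwS, hSwtight, hSwsub⟩ := claim2 w hwS
        have hSneY : U ∪ Sw ≠ Y := by
          intro hEq
          have : w₀ ∈ U ∪ Sw := by rw [hEq]; exact hNTY hw₀NT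
          rcases Finset.mem_union.mp this with h | h
          · exact (Finset.mem_sdiff.mp (hUS h)).2 hw₀NT
          · exact (Finset.mem_sdiff.mp (hSwS h)).2 hw₀NT
        have hmeet : ((U ∩ Sw).Nonempty ∨ (nbhd G U ∩ nbhd G Sw).Nonempty) :=
          Or.inr ⟨u, Finset.mem_inter.mpr ⟨huN, mem_nbhd_of_adj hwSw huw.symm⟩⟩
        have hbig : Tight G (U ∪ Sw) :=
          tight_union (bip_symm hbip) hmc hnt (hUS.trans hSY) (hSwS.trans hSY)
            ⟨a₀, ha₀⟩ hUtight hSwtight hSneY hmeet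
        have hbigfam : U ∪ Sw ∈ fam' := by
          rw [hmemfam']
          refine ⟨Finset.union_subset hUS hSwS, ⟨a₀, Finset.mem_union_left _ ha₀⟩, hbig, ?_⟩
          rw [nbhd_union]
          exact Finset.union_subset hUsub hSwsub
        have hlt : U.card < (U ∪ Sw).card :=
          Finset.card_lt_card ⟨Finset.subset_union_left, fun hsub' =>
            hwU (hsub' (Finset.mem_union_right U hwSw))⟩
        exact absurd (hUmax _ hbigfam) (not_le.mpr hlt)
    rw [← hUeqS]
    exact hUtight
  -- Step 4 : conclude
  have e0 : (nbhd G S).card = S.card + 1 := hStight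
  rw [hNS] at e0
  have e1 : (X \ T).card = X.card - T.card := Finset.card_sdiff_of_subset hTX
  have e2 : S.card = Y.card - (nbhd G T).card := Finset.card_sdiff_of_subset hNTY
  have e3 : T.card ≤ X.card := Finset.card_le_card hTX
  have e4 : (nbhd G T).card ≤ Y.card := Finset.card_le_card hNTY
  have e5 : T.card < X.card :=
    Finset.card_lt_card (Finset.ssubset_iff_of_subset hTX |>.mpr
      ⟨x₁, (Finset.mem_sdiff.mp hx₁).1, (Finset.mem_sdiff.mp hx₁).2⟩)
  show (nbhd G T).card = T.card + 1
  omega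


end Aux

theorem stmt13 {V : Type*} [Fintype V] (G : SimpleGraph V) (X Y : Finset V)
    (hbip : IsBipartition G X Y) (hmc : MatchingCovered G) (h2 : TwoConnected G) :
    (∀ x ∈ X, ∀ y ∈ Y, ¬ G.Adj x y →
        ∃ T : Finset V, Acceptable G X Y T ∧ Tight G T ∧ x ∈ T ∧ y ∉ nbhd G T) ↔
      ((∀ T : Finset V, Acceptable G X Y T → Tight G T) ∧
        (∀ S : Finset V, Acceptable G Y X S → Tight G S)) := by
  have hnt : Nontrivial V := Aux.nontrivial_of_two h2
  constructor
  · intro hsep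
    constructor
    · intro T hT
      exact Aux.acceptable_tight_of_sep hbip hmc hnt hsep hT
    · intro S hS
      obtain ⟨hacc, hN⟩ := Aux.dual (Aux.bip_symm hbip) hmc hnt hS
      have htight : Tight G (X \ nbhd G S) :=
        Aux.acceptable_tight_of_sep hbip hmc hnt hsep hacc
      have hSY : S ⊆ Y := hS.2.1
      have hNX : nbhd G S ⊆ X := Aux.nbhd_subset_Y (Aux.bip_symm hbip) hSY
      have e0 : (nbhd G (X \ nbhd G S)).card = (X \ nbhd G S).card + 1 := htight
      rw [hN] at e0
      have e1 : (Y \ S).card = Y.card - S.card := Finset.card_sdiff_of_subset hSY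
      have e2 : (X \ nbhd G S).card = X.card - (nbhd G S).card := Finset.card_sdiff_of_subset hNX
      have e3 : S.card ≤ Y.card := Finset.card_le_card hSY
      have e4 : (nbhd G S).card ≤ X.card := Finset.card_le_card hNX
      have e5 : X.card = Y.card := Aux.card_X_eq_card_Y hbip hmc hnt
      show (nbhd G S).card = S.card + 1
      omega
  · rintro ⟨hX, -⟩ x hx y hy hxy
    obtain ⟨T, hacc, hxT, hyT⟩ := Aux.exists_acceptable hbip hmc.1 hnt hx hy hxy
    exact ⟨T, hacc, hX T hacc, hxT, hyT⟩
end

section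
/- Let G be a 2-connected matching-covered bipartite graph with bipartition X ⊔ Y, and let T ⊆ X be a tight acceptable set. If a ∈ T, b ∈ Y \ N_G(T) and {a,b} is a non-edge, then {a,b} ∉ Fill(G); consequently, in the graph Ĝ obtained by adjoining all edges of Fill(G) to G, one has N_Ĝ(T) = N_G(T), and T remains a tight acceptable set for Ĝ. -/
attribute [local instance] Classical.propDecidable

/-- `fillRel G X Y x y` holds when `{x, y}` (with `x ∈ X`, `y ∈ Y`) is a non-edge of `G`
that is not separated by any tight acceptable set `T ⊆ X`. -/
def fillRel {V : Type*} [Fintype V] (G : SimpleGraph V) (X Y : Finset V) : V → V → Prop :=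
  fun x y => x ∈ X ∧ y ∈ Y ∧ ¬ G.Adj x y ∧
    ¬ ∃ T : Finset V, Acceptable G X Y T ∧ Tight G T ∧ x ∈ T ∧ y ∉ nbhd G T

/-- The graph `Ĝ` obtained from `G` by adjoining all the non-edges in `Fill(G)`. -/
def fillGraph {V : Type*} [Fintype V] (G : SimpleGraph V) (X Y : Finset V) : SimpleGraph V :=
  G ⊔ SimpleGraph.fromRel (fillRel G X Y)

theorem stmt15 {V : Type*} [Fintype V] (G : SimpleGraph V) (X Y : Finset V)
    (hbip : IsBipartition G X Y) (hmc : MatchingCovered G) (h2 : TwoConnected G)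
    (T : Finset V) (hT : Acceptable G X Y T) (hTt : Tight G T) :
    (∀ a ∈ T, ∀ b ∈ Y \ nbhd G T, ¬ G.Adj a b → ¬ fillRel G X Y a b) ∧
      nbhd (fillGraph G X Y) T = nbhd G T ∧
      Tight (fillGraph G X Y) T ∧
      Acceptable (fillGraph G X Y) X Y T := by

  have hle : G ≤ fillGraph G X Y := le_sup_left
  have hnb : nbhd (fillGraph G X Y) T = nbhd G T := by
    ext y
    simp only [nbhd, Finset.mem_filter, Finset.mem_univ, true_and]
    constructor
    · rintro ⟨x, hx, hadj⟩
      rcases hadj with hadj | hadj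
      · exact ⟨x, hx, hadj⟩
      · rw [SimpleGraph.fromRel_adj] at hadj
        rcases hadj.2 with hr | hr
        · by_contra h
          exact hr.2.2.2 ⟨T, hT, hTt, hx, by
            simp only [nbhd, Finset.mem_filter, Finset.mem_univ, true_and]; exact h⟩
        · exact absurd hr.2.1 (Finset.disjoint_left.mp hbip.1 (hT.2.1 hx))
    · rintro ⟨x, hx, hadj⟩
      exact ⟨x, hx, hle hadj⟩
  refine ⟨?_, hnb, ?_, ?_⟩
  · intro a ha b hb hnadj hfill
    exact hfill.2.2.2 ⟨T, hT, hTt, ha, (Finset.mem_sdiff.mp hb).2⟩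
  · unfold Tight
    rw [hnb]
    exact hTt
  · obtain ⟨hne, hsub, hc1, hc2, x, hx, y, hy, hadj⟩ := hT
    refine ⟨hne, hsub, ?_, ?_, x, hx, y, by rw [hnb]; exact hy, hle hadj⟩
    · rw [hnb]
      exact hc1.mono (fun a b h => hle h)
    · rw [hnb]
      exact hc2.mono (fun a b h => hle h)
end

section
/- Let G be a bipartite graph with bipartition X ⊔ Y satisfying the strict Hall property (every non-empty proper A ⊊ X has |N_G(A)| ≥ |A|+1, and symmetrically for Y) with |X| = |Y|. Let T ⊆ X be a non-empty proper subset with |N_G(T)| = |T| + 1, and set D = N_G(T). If the bipartite graph induced by the edges between T and D has r connected components with X-parts T_1, ..., T_r (each a non-empty proper subset of X), then r = 1; i.e., the graph induced by the edges between T and N_G(T) is connected. -/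
attribute [local instance] Classical.propDecidable

theorem stmt17 {V : Type*} [Fintype V] (G : SimpleGraph V) (X Y : Finset V)
    (hbip : IsBipartition G X Y) (hcard : X.card = Y.card)
    (hallX : ∀ A : Finset V, A ⊆ X → A.Nonempty → A ≠ X → A.card + 1 ≤ (nbhd G A).card)
    (hallY : ∀ B : Finset V, B ⊆ Y → B.Nonempty → B ≠ Y → B.card + 1 ≤ (nbhd G B).card)
    (T : Finset V) (hTX : T ⊆ X) (hTne : T.Nonempty) (hTpr : T ≠ X)
    (hTt : Tight G T) :
    (G.induce (↑(T ∪ nbhd G T) : Set V)).Connected := by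
  classical
  set D := nbhd G T with hD
  set S : Set V := ↑(T ∪ D) with hS
  have hnb : ∀ (A : Finset V) (d : V), d ∈ nbhd G A ↔ ∃ x ∈ A, G.Adj x d := by
    intro A d; simp [nbhd]
  have hmemT : ∀ t ∈ T, (t : V) ∈ S := by
    intro t ht; simp only [hS, Finset.coe_union, Set.mem_union, Finset.mem_coe]; exact Or.inl ht
  have hmemD : ∀ d ∈ D, (d : V) ∈ S := by
    intro d hd; simp only [hS, Finset.coe_union, Set.mem_union, Finset.mem_coe]; exact Or.inr hd
  have hadjH : ∀ {u v : V} (hu : u ∈ S) (hv : v ∈ S), G.Adj u v →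
      (G.induce S).Adj ⟨u, hu⟩ ⟨v, hv⟩ := fun _ _ h => h
  -- every t in T has a neighbor in D
  have hXne : ∀ A : Finset V, A ⊆ T → A ≠ X := by
    intro A hA hEq
    exact hTpr (Finset.Subset.antisymm hTX (hEq ▸ hA))
  have hTnbr : ∀ t ∈ T, ∃ d ∈ D, G.Adj t d := by
    intro t ht
    have h1 := hallX {t} (by simpa using hTX ht) (by simp)
      (hXne {t} (by simpa using ht))
    have h2 : (nbhd G {t}).Nonempty := Finset.card_pos.mp (by omega)
    obtain ⟨d, hd⟩ := h2
    obtain ⟨x, hx, hadj⟩ := (hnb _ _).mp hd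
    simp only [Finset.mem_singleton] at hx
    exact ⟨d, (hnb T d).mpr ⟨t, ht, hx ▸ hadj⟩, hx ▸ hadj⟩
  have hDnbr : ∀ d ∈ D, ∃ t ∈ T, G.Adj t d := fun d hd => (hnb T d).mp hd
  rw [SimpleGraph.connected_iff]
  refine ⟨?_, ?_⟩
  swap
  · obtain ⟨t, ht⟩ := hTne; exact ⟨⟨t, hmemT t ht⟩⟩
  intro a b
  by_contra hab
  set H := G.induce S with hH
  set Ra : V → Prop := fun u => ∃ h : u ∈ S, H.Reachable ⟨u, h⟩ a with hRa
  set Rb : V → Prop := fun u => ∃ h : u ∈ S, H.Reachable ⟨u, h⟩ b with hRb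
  set T1 := T.filter Ra with hT1
  set T2 := T.filter Rb with hT2
  set T3 := T \ (T1 ∪ T2) with hT3
  set D1 := D.filter Ra with hD1
  set D2 := D.filter Rb with hD2
  -- reach of adjacent vertices
  have hstepa : ∀ {u v : V}, u ∈ S → v ∈ S → G.Adj u v → Ra u → Ra v := by
    rintro u v hu hv hadj ⟨h, hr⟩
    exact ⟨hv, ((hadjH hv hu hadj.symm).reachable).trans hr⟩
  have hstepb : ∀ {u v : V}, u ∈ S → v ∈ S → G.Adj u v → Rb u → Rb v := by
    rintro u v hu hv hadj ⟨h, hr⟩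
    exact ⟨hv, ((hadjH hv hu hadj.symm).reachable).trans hr⟩
  -- a is reachable from some t ∈ T
  have hT1ne : T1.Nonempty := by
    have haS : (a : V) ∈ S := a.2
    have : (a : V) ∈ T ∪ D := by
      simpa only [hS, Finset.coe_union, Set.mem_union, Finset.mem_coe, Finset.mem_union] using haS
    have hRaa : Ra (a : V) := ⟨a.2, by exact SimpleGraph.Reachable.refl a⟩
    rcases Finset.mem_union.mp this with hT | hDm
    · exact ⟨a, Finset.mem_filter.mpr ⟨hT, hRaa⟩⟩
    · obtain ⟨t, ht, hadj⟩ := hDnbr _ hDm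
      exact ⟨t, Finset.mem_filter.mpr ⟨ht, hstepa a.2 (hmemT t ht) hadj.symm hRaa⟩⟩
  have hT2ne : T2.Nonempty := by
    have hbS : (b : V) ∈ S := b.2
    have : (b : V) ∈ T ∪ D := by
      simpa only [hS, Finset.coe_union, Set.mem_union, Finset.mem_coe, Finset.mem_union] using hbS
    have hRbb : Rb (b : V) := ⟨b.2, by exact SimpleGraph.Reachable.refl b⟩
    rcases Finset.mem_union.mp this with hT | hDm
    · exact ⟨b, Finset.mem_filter.mpr ⟨hT, hRbb⟩⟩
    · obtain ⟨t, ht, hadj⟩ := hDnbr _ hDm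
      exact ⟨t, Finset.mem_filter.mpr ⟨ht, hstepb b.2 (hmemT t ht) hadj.symm hRbb⟩⟩
  -- disjointness from ¬Reachable a b
  have hnotboth : ∀ u : V, Ra u → Rb u → False := by
    rintro u ⟨h1, hr1⟩ ⟨h2, hr2⟩
    exact hab (hr1.symm.trans hr2)
  -- neighborhood inclusions
  have hsub1 : nbhd G T1 ⊆ D1 := by
    intro d hd
    obtain ⟨t, ht1, hadj⟩ := (hnb _ _).mp hd
    obtain ⟨ht, hra⟩ := Finset.mem_filter.mp ht1
    have hdD : d ∈ D := (hnb T d).mpr ⟨t, ht, hadj⟩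
    exact Finset.mem_filter.mpr ⟨hdD, hstepa (hmemT t ht) (hmemD d hdD) hadj hra⟩
  have hsub2 : nbhd G T2 ⊆ D2 := by
    intro d hd
    obtain ⟨t, ht2, hadj⟩ := (hnb _ _).mp hd
    obtain ⟨ht, hrb⟩ := Finset.mem_filter.mp ht2
    have hdD : d ∈ D := (hnb T d).mpr ⟨t, ht, hadj⟩
    exact Finset.mem_filter.mpr ⟨hdD, hstepb (hmemT t ht) (hmemD d hdD) hadj hrb⟩
  have hsub3 : nbhd G T3 ⊆ D \ (D1 ∪ D2) := by
    intro d hd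
    obtain ⟨t, ht3, hadj⟩ := (hnb _ _).mp hd
    obtain ⟨ht, htn⟩ := Finset.mem_sdiff.mp ht3
    have hdD : d ∈ D := (hnb T d).mpr ⟨t, ht, hadj⟩
    refine Finset.mem_sdiff.mpr ⟨hdD, ?_⟩
    intro hmem
    rcases Finset.mem_union.mp hmem with h1 | h2
    · exact htn (Finset.mem_union.mpr (Or.inl (Finset.mem_filter.mpr
        ⟨ht, hstepa (hmemD d hdD) (hmemT t ht) hadj.symm (Finset.mem_filter.mp h1).2⟩)))
    · exact htn (Finset.mem_union.mpr (Or.inr (Finset.mem_filter.mpr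
        ⟨ht, hstepb (hmemD d hdD) (hmemT t ht) hadj.symm (Finset.mem_filter.mp h2).2⟩)))
  -- disjointness of D1 D2 and T1 T2
  have hdisjD : Disjoint D1 D2 := by
    rw [Finset.disjoint_left]
    intro d h1 h2
    exact hnotboth d (Finset.mem_filter.mp h1).2 (Finset.mem_filter.mp h2).2
  have hdisjT : Disjoint T1 T2 := by
    rw [Finset.disjoint_left]
    intro t h1 h2
    exact hnotboth t (Finset.mem_filter.mp h1).2 (Finset.mem_filter.mp h2).2
  -- Hall bounds
  have hb1 : T1.card + 1 ≤ (nbhd G T1).card :=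
    hallX T1 ((Finset.filter_subset _ _).trans hTX) hT1ne (hXne T1 (Finset.filter_subset _ _))
  have hb2 : T2.card + 1 ≤ (nbhd G T2).card :=
    hallX T2 ((Finset.filter_subset _ _).trans hTX) hT2ne (hXne T2 (Finset.filter_subset _ _))
  have hb3 : T3.card ≤ (D \ (D1 ∪ D2)).card := by
    by_cases h3 : T3.Nonempty
    · have := hallX T3 ((Finset.sdiff_subset).trans hTX) h3 (hXne T3 Finset.sdiff_subset)
      have := Finset.card_le_card hsub3
      omega
    · simp [Finset.not_nonempty_iff_eq_empty.mp h3]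
  have hc1 : (nbhd G T1).card ≤ D1.card := Finset.card_le_card hsub1
  have hc2 : (nbhd G T2).card ≤ D2.card := Finset.card_le_card hsub2
  -- counting
  have hT12sub : T1 ∪ T2 ⊆ T := by
    intro t ht
    rcases Finset.mem_union.mp ht with h | h
    exacts [(Finset.mem_filter.mp h).1, (Finset.mem_filter.mp h).1]
  have hTsum : T1.card + T2.card + T3.card = T.card := by
    have h1 : (T1 ∪ T2).card = T1.card + T2.card := Finset.card_union_of_disjoint hdisjT
    have h2 : T3.card = T.card - (T1 ∪ T2).card := Finset.card_sdiff_of_subset hT12sub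
    have h3 := Finset.card_le_card hT12sub
    omega
  have hD12sub : D1 ∪ D2 ⊆ D := by
    intro d hd
    rcases Finset.mem_union.mp hd with h | h
    exacts [(Finset.mem_filter.mp h).1, (Finset.mem_filter.mp h).1]
  have hDsum : D1.card + D2.card + (D \ (D1 ∪ D2)).card = D.card := by
    have h1 : (D1 ∪ D2).card = D1.card + D2.card := Finset.card_union_of_disjoint hdisjD
    have h2 := Finset.card_sdiff_of_subset hD12sub
    have h3 := Finset.card_le_card hD12sub
    omega
  have hTight : D.card = T.card + 1 := hTt
  omega
end
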